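/- arXiv:1205.1810 — 3 statements merged into one kernel-verified Lean document; each statement's English description precedes it below -/
import Mathlib

section
/- Let [a,b] be a finite real interval, m ≥ 1, A an integrable m×m complex matrix-valued function on [a,b] (each entry in L¹([a,b],ℂ)), φ : [a,b] → ℂ^m integrable, c ∈ [a,b], and α ∈ ℂ^m. Then there exists exactly one continuous function w : [a,b] → ℂ^m satisfying w(t) = α + ∫_c^t ( A(s) w(s) + φ(s) ) ds for all t ∈ [a,b] (i.e., a unique absolutely continuous solution of the Cauchy problem w' = A w + φ, w(c) = α). -/
open MeasureTheory Set intervalIntegral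

section Aux

lemma aux_pow_ineq (n : ℕ) {x y : ℝ} (h0 : 0 ≤ x) (hxy : x ≤ y) :
    (n + 1 : ℝ) * (x ^ n * (y - x)) ≤ y ^ (n + 1) - x ^ (n + 1) := by
  induction n with
  | zero => simp
  | succ n ih =>
    have hy : 0 ≤ y := h0.trans hxy
    have hpow : x ^ (n+1) ≤ y ^ (n+1) := pow_le_pow_left₀ h0 hxy _
    have hx : x * ((n + 1 : ℝ) * (x ^ n * (y - x))) ≤ x * (y ^ (n + 1) - x ^ (n + 1)) :=
      mul_le_mul_of_nonneg_left ih h0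
    have key : x * (y ^ (n+1) - x ^ (n+1)) + x ^ (n+1) * (y - x) ≤ y ^ (n+2) - x ^ (n+2) := by
      have : (y - x) * (y ^ (n+1) - x ^ (n+1)) ≥ 0 :=
        mul_nonneg (by linarith) (by linarith)
      ring_nf
      ring_nf at this
      nlinarith [this]
    have hxn : x ^ (n+1) * (y - x) ≥ 0 := mul_nonneg (pow_nonneg h0 _) (by linarith)
    push_cast
    calc ((n:ℝ) + 1 + 1) * (x ^ (n+1) * (y - x))
        = x * ((n + 1 : ℝ) * (x ^ n * (y - x))) + x ^ (n+1) * (y - x) := by ring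
      _ ≤ x * (y ^ (n+1) - x ^ (n+1)) + x ^ (n+1) * (y - x) := by linarith
      _ ≤ y ^ (n+2) - x ^ (n+2) := key

lemma key_ineq (B : ℝ → ℝ) (hB : ∀ x y, IntervalIntegrable B volume x y)
    (hB0 : ∀ x, 0 ≤ B x) (c t : ℝ) (hct : c ≤ t) (n : ℕ) :
    ∫ s in c..t, B s * (∫ r in c..s, B r) ^ n
      ≤ (∫ r in c..t, B r) ^ (n + 1) / (n + 1) := by
  set G : ℝ → ℝ := fun x => ∫ r in c..x, B r with hG
  have hGcont : Continuous G := intervalIntegral.continuous_primitive hB c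
  have hGsub : ∀ x y, G y - G x = ∫ r in x..y, B r := fun x y =>
    integral_interval_sub_left (hB c y) (hB c x)
  have hGmono : Monotone G := by
    intro x y hxy
    have := hGsub x y
    have h2 : 0 ≤ ∫ r in x..y, B r := intervalIntegral.integral_nonneg hxy fun u _ => hB0 u
    linarith
  have hG0 : ∀ x, c ≤ x → 0 ≤ G x := by
    intro x hx
    exact intervalIntegral.integral_nonneg hx fun u _ => hB0 u
  have hGc : G c = 0 := intervalIntegral.integral_same
  have hGt0 : 0 ≤ G t := hG0 t hct
  -- integrability of the integrand
  have hBG : ∀ x y, IntervalIntegrable (fun s => B s * G s ^ n) volume x y := by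
    intro x y
    exact (hB x y).mul_continuousOn ((hGcont.pow n).continuousOn)
  refine le_of_forall_pos_le_add ?_
  intro ε hε
  set ε₀ : ℝ := ε / (G t ^ n + 1) with hε₀def
  have hGtn : 0 ≤ G t ^ n := pow_nonneg hGt0 n
  have hε₀ : 0 < ε₀ := div_pos hε (by linarith)
  -- uniform continuity of G on [c,t]
  obtain ⟨δ, hδ, hδG⟩ : ∃ δ > 0, ∀ x ∈ Icc c t, ∀ y ∈ Icc c t,
      dist x y < δ → dist (G x) (G y) < ε₀ := by
    have := (isCompact_Icc (a := c) (b := t)).uniformContinuousOn_of_continuous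
      hGcont.continuousOn
    rcases Metric.uniformContinuousOn_iff.mp this ε₀ hε₀ with ⟨δ, hδ, h⟩
    exact ⟨δ, hδ, fun x hx y hy hxy => h x hx y hy hxy⟩
  -- choose a fine partition
  obtain ⟨k₀, hk₀⟩ := exists_nat_gt ((t - c) / δ)
  set k : ℕ := k₀ + 1 with hkdef
  have hk : (t - c) / δ < k := lt_of_lt_of_le hk₀ (by exact_mod_cast Nat.le_succ k₀)
  have hkpos : (0:ℝ) < k := by positivity
  set p : ℕ → ℝ := fun i => c + i * ((t - c) / k) with hp
  have hstep0 : 0 ≤ (t - c) / k := div_nonneg (by linarith) hkpos.le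
  have hp0 : p 0 = c := by simp [hp]
  have hpk : p k = t := by simp only [hp]; field_simp; ring
  have hpmono : ∀ i j : ℕ, i ≤ j → p i ≤ p j := by
    intro i j hij
    simp only [hp]
    have : (i:ℝ) ≤ j := by exact_mod_cast hij
    nlinarith
  have hpmem : ∀ i : ℕ, i ≤ k → p i ∈ Icc c t := by
    intro i hi
    constructor
    · simpa [hp0] using hpmono 0 i (Nat.zero_le i)
    · simpa [hpk] using hpmono i k hi
  have hpdist : ∀ i : ℕ, dist (p i) (p (i + 1)) < δ := by
    intro i
    have : p (i+1) - p i = (t - c) / k := by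
      simp only [hp]; push_cast; ring
    rw [Real.dist_eq, abs_sub_comm, this, abs_of_nonneg hstep0]
    rw [div_lt_iff₀ hkpos]
    have := (div_lt_iff₀ hδ).mp hk
    linarith [mul_comm δ (k:ℝ)]
  have split : ∫ s in c..t, B s * G s ^ n
      = ∑ i ∈ Finset.range k, ∫ s in p i..p (i+1), B s * G s ^ n := by
    rw [intervalIntegral.sum_integral_adjacent_intervals (fun i _ => hBG _ _)]
    rw [hp0, hpk]
  have piece : ∀ i ∈ Finset.range k, ∫ s in p i..p (i+1), B s * G s ^ n
      ≤ (G (p (i+1)) ^ (n+1) - G (p i) ^ (n+1)) / (n+1)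
        + ε₀ * (G (p (i+1)) ^ n - G (p i) ^ n) := by
    intro i hi
    have hik : i + 1 ≤ k := Finset.mem_range.mp hi
    have hmem := hpmem i (Nat.le_of_succ_le hik)
    have hmem' := hpmem (i+1) hik
    have hple : p i ≤ p (i+1) := hpmono i (i+1) (Nat.le_succ i)
    set x := G (p i) with hx
    set y := G (p (i+1)) with hy
    have hxy : x ≤ y := hGmono hple
    have hx0 : 0 ≤ x := hG0 _ hmem.1
    have hy0 : 0 ≤ y := hx0.trans hxy
    have hyx : y - x < ε₀ := by
      have := hδG (p (i+1)) hmem' (p i) hmem (by rw [dist_comm]; exact hpdist i)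
      rw [Real.dist_eq] at this
      calc y - x ≤ |y - x| := le_abs_self _
        _ < ε₀ := by rwa [← hx, ← hy] at this
    have step1 : ∫ s in p i..p (i+1), B s * G s ^ n
        ≤ ∫ s in p i..p (i+1), B s * y ^ n := by
      apply intervalIntegral.integral_mono_on hple (hBG _ _) ((hB _ _).mul_const _)
      intro s hs
      have hGs0 : 0 ≤ G s := hG0 s (hmem.1.trans hs.1)
      have hGsy : G s ≤ y := hGmono hs.2
      exact mul_le_mul_of_nonneg_left (pow_le_pow_left₀ hGs0 hGsy n) (hB0 s)
    have step2 : ∫ s in p i..p (i+1), B s * y ^ n = (y - x) * y ^ n := by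
      rw [intervalIntegral.integral_mul_const, ← hGsub]
    have hnpos : (0:ℝ) < n + 1 := by positivity
    have haux := aux_pow_ineq n hx0 hxy
    have hpow_mono : x ^ n ≤ y ^ n := pow_le_pow_left₀ hx0 hxy n
    have step3 : (y - x) * y ^ n
        ≤ (y ^ (n+1) - x ^ (n+1)) / (n+1) + ε₀ * (y ^ n - x ^ n) := by
      have h1 : x ^ n * (y - x) ≤ (y ^ (n+1) - x ^ (n+1)) / (n+1) := by
        rw [le_div_iff₀ hnpos]
        calc x ^ n * (y - x) * ((n:ℝ)+1) = ((n:ℝ)+1) * (x ^ n * (y - x)) := by ring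
          _ ≤ y ^ (n+1) - x ^ (n+1) := by exact_mod_cast haux
      have h2 : (y ^ n - x ^ n) * (y - x) ≤ ε₀ * (y ^ n - x ^ n) := by
        have hd : 0 ≤ y ^ n - x ^ n := by linarith
        calc (y ^ n - x ^ n) * (y - x) ≤ (y ^ n - x ^ n) * ε₀ :=
              mul_le_mul_of_nonneg_left hyx.le hd
          _ = ε₀ * (y ^ n - x ^ n) := by ring
      nlinarith [h1, h2]
    calc ∫ s in p i..p (i+1), B s * G s ^ n
        ≤ ∫ s in p i..p (i+1), B s * y ^ n := step1
      _ = (y - x) * y ^ n := step2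
      _ ≤ (y ^ (n+1) - x ^ (n+1)) / (n+1) + ε₀ * (y ^ n - x ^ n) := step3
  calc ∫ s in c..t, B s * G s ^ n
      = ∑ i ∈ Finset.range k, ∫ s in p i..p (i+1), B s * G s ^ n := split
    _ ≤ ∑ i ∈ Finset.range k, ((G (p (i+1)) ^ (n+1) - G (p i) ^ (n+1)) / (n+1)
        + ε₀ * (G (p (i+1)) ^ n - G (p i) ^ n)) := Finset.sum_le_sum piece
    _ = (G t ^ (n+1) - G c ^ (n+1)) / (n+1) + ε₀ * (G t ^ n - G c ^ n) := by
        rw [Finset.sum_add_distrib, ← Finset.sum_div, ← Finset.mul_sum,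
          Finset.sum_range_sub (fun i => G (p i) ^ (n+1)),
          Finset.sum_range_sub (fun i => G (p i) ^ n), hp0, hpk]
    _ ≤ (∫ r in c..t, B r) ^ (n + 1) / (n + 1) + ε := by
        have h1 : G c ^ (n+1) = 0 := by rw [hGc]; simp
        have h2 : 0 ≤ G c ^ n := pow_nonneg (le_of_eq hGc.symm) n
        have h3 : ε₀ * (G t ^ n - G c ^ n) ≤ ε₀ * G t ^ n := by
          apply mul_le_mul_of_nonneg_left _ hε₀.le
          linarith
        have h4 : ε₀ * G t ^ n ≤ ε := by
          rw [hε₀def, div_mul_eq_mul_div, div_le_iff₀ (by linarith : (0:ℝ) < G t ^ n + 1)]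
          nlinarith
        have : (∫ r in c..t, B r) = G t := rfl
        rw [this, h1, sub_zero]
        push_cast
        linarith [h3, h4]

lemma key_ineq' (B : ℝ → ℝ) (hB : ∀ x y, IntervalIntegrable B volume x y)
    (hB0 : ∀ x, 0 ≤ B x) (c t : ℝ) (htc : t ≤ c) (n : ℕ) :
    ∫ s in t..c, B s * (∫ r in s..c, B r) ^ n
      ≤ (∫ r in t..c, B r) ^ (n + 1) / (n + 1) := by
  set d : ℝ := t + c with hd
  set B₂ : ℝ → ℝ := fun x => B (d - x) with hB₂def
  have hB₂ : ∀ x y, IntervalIntegrable B₂ volume x y := by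
    intro x y
    have := (hB (d - x) (d - y)).comp_sub_left d
    simpa using this
  have hB₂0 : ∀ x, 0 ≤ B₂ x := fun x => hB0 _
  have h := key_ineq B₂ hB₂ hB₂0 t c htc n
  have e1 : (∫ r in t..c, B₂ r) = ∫ r in t..c, B r := by
    rw [hB₂def]
    rw [intervalIntegral.integral_comp_sub_left B d]
    congr 1 <;> ring
  set F : ℝ → ℝ := fun y => B y * (∫ r in y..c, B r) ^ n with hF
  have e2 : (fun s => B₂ s * (∫ r in t..s, B₂ r) ^ n) = fun s => F (d - s) := by
    funext s
    simp only [hB₂def, hF]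
    congr 2
    rw [intervalIntegral.integral_comp_sub_left B d]
    congr 1
    ring
  have e3 : ∫ s in t..c, F (d - s) = ∫ s in t..c, F s := by
    rw [intervalIntegral.integral_comp_sub_left F d]
    congr 1 <;> ring
  rw [e2] at h
  rw [e3] at h
  rw [e1] at h
  exact h

lemma aux_aesm_pi {m : ℕ} {f : ℝ → Fin m → ℂ}
    (h : ∀ j, AEMeasurable (fun x => f x j) (volume : Measure ℝ)) :
    AEStronglyMeasurable f (volume : Measure ℝ) := by
  have hmeas : AEMeasurable f (volume : Measure ℝ) := by
    refine ⟨fun x j => (h j).mk _ x, measurable_pi_iff.mpr fun j => (h j).measurable_mk, ?_⟩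
    filter_upwards [MeasureTheory.ae_all_iff.mpr fun j => (h j).ae_eq_mk] with x hx
    funext j
    exact hx j
  exact hmeas.aestronglyMeasurable

end Aux

open Matrix

set_option maxHeartbeats 1000000

/-- **Existence and uniqueness for the Cauchy problem of a first-order linear system with
integrable coefficients.**  Let `[a,b]` be a finite interval, `m ≥ 1`, `A` an integrable
`m × m` complex matrix-valued function on `[a,b]`, `φ : [a,b] → ℂ^m` integrable,
`c ∈ [a,b]` and `α ∈ ℂ^m`.  Then there is exactly one continuous `w : [a,b] → ℂ^m`
(unique as a function on `[a,b]`) with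
`w t = α + ∫_c^t (A s · w s + φ s) ds` for all `t ∈ [a,b]`, i.e. a unique absolutely
continuous (Carathéodory) solution of `w' = A w + φ`, `w c = α`. -/
theorem cauchy_problem_linear_system_existence_uniqueness
    (a b : ℝ) (hab : a < b) (m : ℕ) (hm : 1 ≤ m)
    (A : ℝ → Matrix (Fin m) (Fin m) ℂ)
    (hA : ∀ j k : Fin m, MeasureTheory.IntegrableOn (fun t => A t j k) (Set.Icc a b))
    (φ : ℝ → (Fin m → ℂ))
    (hφ : MeasureTheory.IntegrableOn φ (Set.Icc a b))
    (c : ℝ) (hc : c ∈ Set.Icc a b) (α : Fin m → ℂ) :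
    ∃ w : ℝ → (Fin m → ℂ),
      (ContinuousOn w (Set.Icc a b) ∧
        MeasureTheory.IntegrableOn (fun s => (A s).mulVec (w s) + φ s) (Set.Icc a b) ∧
        ∀ t ∈ Set.Icc a b, w t = α + ∫ s in c..t, ((A s).mulVec (w s) + φ s)) ∧
      ∀ w' : ℝ → (Fin m → ℂ),
        (ContinuousOn w' (Set.Icc a b) ∧
          MeasureTheory.IntegrableOn (fun s => (A s).mulVec (w' s) + φ s) (Set.Icc a b) ∧
          ∀ t ∈ Set.Icc a b, w' t = α + ∫ s in c..t, ((A s).mulVec (w' s) + φ s)) →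
        Set.EqOn w' w (Set.Icc a b) := by
  have hab' : a ≤ b := hab.le
  set Ic : Set ℝ := Set.Icc a b with hIc
  -- truncated data
  set A' : ℝ → Matrix (Fin m) (Fin m) ℂ := Ic.indicator A with hA'def
  set φ' : ℝ → (Fin m → ℂ) := Ic.indicator φ with hφ'def
  set B : ℝ → ℝ := Ic.indicator (fun t => ∑ j : Fin m, ∑ k : Fin m, ‖A t j k‖) with hBdef
  have hBint : Integrable B := by
    apply MeasureTheory.IntegrableOn.integrable_indicator _ measurableSet_Icc
    exact integrable_finset_sum _ fun j _ => integrable_finset_sum _ fun k _ => (hA j k).norm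
  have hB0 : ∀ x, 0 ≤ B x := by
    intro x
    apply Set.indicator_nonneg
    intro t _
    positivity
  have hBii : ∀ x y, IntervalIntegrable B volume x y := fun x y => hBint.intervalIntegrable
  have hA'entry : ∀ j k : Fin m, (fun t => A' t j k) = Ic.indicator (fun t => A t j k) := by
    intro j k
    funext t
    simp only [hA'def, Set.indicator_apply]
    split_ifs <;> simp
  have hA'int : ∀ j k : Fin m, Integrable (fun t => A' t j k) := by
    intro j k
    rw [hA'entry]
    exact (hA j k).integrable_indicator measurableSet_Icc
  have hφ'int : Integrable φ' := hφ.integrable_indicator measurableSet_Icc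
  -- the fundamental pointwise bound
  have hbound : ∀ (t : ℝ) (x : Fin m → ℂ), ‖(A' t).mulVec x‖ ≤ B t * ‖x‖ := by
    intro t x
    by_cases ht : t ∈ Ic
    · simp only [hA'def, hBdef, Set.indicator_of_mem ht]
      rw [pi_norm_le_iff_of_nonneg (by positivity)]
      intro j
      calc ‖(A t).mulVec x j‖ = ‖∑ k : Fin m, A t j k * x k‖ := by
            simp [Matrix.mulVec, dotProduct]
        _ ≤ ∑ k : Fin m, ‖A t j k * x k‖ := norm_sum_le _ _
        _ = ∑ k : Fin m, ‖A t j k‖ * ‖x k‖ := by simp [norm_mul]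
        _ ≤ ∑ k : Fin m, ‖A t j k‖ * ‖x‖ := Finset.sum_le_sum fun k _ =>
            mul_le_mul_of_nonneg_left (norm_le_pi_norm x k) (norm_nonneg _)
        _ = (∑ k : Fin m, ‖A t j k‖) * ‖x‖ := (Finset.sum_mul _ _ _).symm
        _ ≤ (∑ j' : Fin m, ∑ k : Fin m, ‖A t j' k‖) * ‖x‖ := by
            apply mul_le_mul_of_nonneg_right _ (norm_nonneg _)
            exact Finset.single_le_sum (f := fun j' => ∑ k : Fin m, ‖A t j' k‖)
              (fun _ _ => by positivity) (Finset.mem_univ j)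
    · simp [hA'def, hBdef, Set.indicator_of_notMem ht]
  -- integrability of A' ⬝ᵥ ψ for continuous bounded ψ
  have hAmul : ∀ ψ : ℝ → (Fin m → ℂ), Continuous ψ → ∀ C : ℝ, (∀ s, ‖ψ s‖ ≤ C) →
      Integrable (fun s => (A' s).mulVec (ψ s)) := by
    intro ψ hψ C hC
    have hmeas : AEStronglyMeasurable (fun s => (A' s).mulVec (ψ s)) volume := by
      apply aux_aesm_pi
      intro j
      have : (fun s => (A' s).mulVec (ψ s) j) = fun s => ∑ k : Fin m, A' s j k * ψ s k := by
        funext s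
        simp [Matrix.mulVec, dotProduct]
      rw [this]
      apply Finset.aemeasurable_fun_sum
      intro k _
      exact ((hA'int j k).aemeasurable).mul
        (((continuous_apply k).comp hψ).measurable.aemeasurable)
    apply Integrable.mono' (hBint.mul_const C) hmeas
    filter_upwards with s
    calc ‖(A' s).mulVec (ψ s)‖ ≤ B s * ‖ψ s‖ := hbound s (ψ s)
      _ ≤ B s * C := mul_le_mul_of_nonneg_left (hC s) (hB0 s)
  -- the Banach space of continuous functions on [a,b]
  haveI : Nonempty (Set.Icc a b) := ⟨⟨c, hc⟩⟩
  set X := C(Set.Icc a b, Fin m → ℂ) with hX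
  -- extension of elements of X to ℝ
  have extcont : ∀ u : X, Continuous (Set.IccExtend hab' ⇑u) := fun u =>
    u.continuous.Icc_extend'
  have extbd : ∀ u v : X, ∀ s : ℝ,
      ‖Set.IccExtend hab' ⇑u s - Set.IccExtend hab' ⇑v s‖ ≤ dist u v := by
    intro u v s
    rw [← dist_eq_norm]
    exact ContinuousMap.dist_apply_le_dist _
  have extnorm : ∀ u : X, ∀ s : ℝ, ‖Set.IccExtend hab' ⇑u s‖ ≤ ‖u‖ := fun u s =>
    ContinuousMap.norm_coe_le_norm u _
  have hInt : ∀ u : X,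
      Integrable (fun s => (A' s).mulVec (Set.IccExtend hab' ⇑u s) + φ' s) := by
    intro u
    exact (hAmul _ (extcont u) ‖u‖ (extnorm u)).add hφ'int
  -- the Picard operator
  set T : X → X := fun u => ContinuousMap.mk
    (fun τ : Set.Icc a b =>
      α + ∫ s in c..(τ:ℝ), ((A' s).mulVec (Set.IccExtend hab' ⇑u s) + φ' s))
    (by
      apply Continuous.add continuous_const
      exact ((hInt u).continuous_primitive c).comp continuous_subtype_val) with hT
  have hTapp : ∀ (u : X) (τ : Set.Icc a b), (T u) τ =
      α + ∫ s in c..(τ:ℝ), ((A' s).mulVec (Set.IccExtend hab' ⇑u s) + φ' s) := by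
    intro u τ
    rfl
  have hGcont : Continuous (fun x => ∫ r in c..x, B r) :=
    intervalIntegral.continuous_primitive hBii c
  -- the key iterated estimate
  have key : ∀ n : ℕ, ∀ u v : X, ∀ τ : Set.Icc a b,
      ‖(T^[n] u) τ - (T^[n] v) τ‖
        ≤ dist u v * (|∫ r in c..(τ:ℝ), B r| ^ n / (n.factorial : ℝ)) := by
    intro n
    induction n with
    | zero =>
      intro u v τ
      simp only [Function.iterate_zero, id_eq, pow_zero, Nat.factorial_zero, Nat.cast_one,
        div_one, mul_one]
      rw [← dist_eq_norm]
      exact ContinuousMap.dist_apply_le_dist τ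
    | succ n ih =>
      intro u v τ
      set U := T^[n] u with hU
      set V := T^[n] v with hV
      set D := dist u v with hD
      have hD0 : (0:ℝ) ≤ D := dist_nonneg
      have hfac : (0:ℝ) < (n.factorial : ℝ) := by exact_mod_cast n.factorial_pos
      rw [Function.iterate_succ_apply', Function.iterate_succ_apply']
      set Ue := Set.IccExtend hab' ⇑U with hUe
      set Ve := Set.IccExtend hab' ⇑V with hVe
      have hdiffInt : Integrable (fun s => (A' s).mulVec (Ue s - Ve s)) :=
        hAmul _ ((extcont U).sub (extcont V)) (dist U V) (fun s => extbd U V s)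
      have hintegrand : (fun s => ((A' s).mulVec (Ue s) + φ' s)
            - ((A' s).mulVec (Ve s) + φ' s))
          = fun s => (A' s).mulVec (Ue s - Ve s) := by
        funext s
        rw [Matrix.mulVec_sub]
        abel
      have hsub : (T U) τ - (T V) τ = ∫ s in c..(τ:ℝ), (A' s).mulVec (Ue s - Ve s) := by
        rw [hTapp, hTapp, add_sub_add_left_eq_sub,
          ← intervalIntegral.integral_sub (hInt U).intervalIntegrable
            (hInt V).intervalIntegrable, hintegrand]
      have pointbound : ∀ s, s ∈ Ic →
          ‖Ue s - Ve s‖ ≤ D * (|∫ r in c..s, B r| ^ n / (n.factorial:ℝ)) := by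
        intro s hs
        have h1 : Ue s = U ⟨s, hs⟩ := Set.IccExtend_of_mem hab' _ hs
        have h2 : Ve s = V ⟨s, hs⟩ := Set.IccExtend_of_mem hab' _ hs
        rw [h1, h2]
        exact ih u v ⟨s, hs⟩
      rcases le_total c (τ:ℝ) with hcτ | hτc
      · rw [hsub]
        have hrhsInt : IntervalIntegrable
            (fun s => B s * (D * ((∫ r in c..s, B r) ^ n / (n.factorial:ℝ))))
            volume c τ := by
          apply (hBii c τ).mul_continuousOn
          exact (continuous_const.mul ((hGcont.pow n).div_const _)).continuousOn
        calc ‖∫ s in c..(τ:ℝ), (A' s).mulVec (Ue s - Ve s)‖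
            ≤ ∫ s in c..(τ:ℝ), ‖(A' s).mulVec (Ue s - Ve s)‖ :=
              intervalIntegral.norm_integral_le_integral_norm hcτ
          _ ≤ ∫ s in c..(τ:ℝ), B s * (D * ((∫ r in c..s, B r) ^ n / (n.factorial:ℝ))) := by
              apply intervalIntegral.integral_mono_on hcτ
                hdiffInt.norm.intervalIntegrable hrhsInt
              intro s hs
              have hsIc : s ∈ Ic := ⟨hc.1.trans hs.1, hs.2.trans τ.2.2⟩
              have habs : |∫ r in c..s, B r| = ∫ r in c..s, B r :=
                abs_of_nonneg (intervalIntegral.integral_nonneg hs.1 fun r _ => hB0 r)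
              calc ‖(A' s).mulVec (Ue s - Ve s)‖ ≤ B s * ‖Ue s - Ve s‖ := hbound s _
                _ ≤ B s * (D * ((∫ r in c..s, B r) ^ n / (n.factorial:ℝ))) := by
                    apply mul_le_mul_of_nonneg_left _ (hB0 s)
                    have := pointbound s hsIc
                    rwa [habs] at this
          _ = (D / (n.factorial:ℝ)) * ∫ s in c..(τ:ℝ), B s * (∫ r in c..s, B r) ^ n := by
              rw [← intervalIntegral.integral_const_mul]
              apply intervalIntegral.integral_congr
              intro s _
              ring
          _ ≤ (D / (n.factorial:ℝ)) * ((∫ r in c..(τ:ℝ), B r) ^ (n+1) / ((n:ℝ)+1)) :=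
              mul_le_mul_of_nonneg_left (key_ineq B hBii hB0 c τ hcτ n) (by positivity)
          _ = D * (|∫ r in c..(τ:ℝ), B r| ^ (n+1) / ((n+1).factorial : ℝ)) := by
              rw [abs_of_nonneg (intervalIntegral.integral_nonneg hcτ fun r _ => hB0 r),
                Nat.factorial_succ]
              push_cast
              rw [div_mul_div_comm, mul_div_assoc]
              ring_nf
      · rw [hsub, intervalIntegral.integral_symm (τ:ℝ) c, norm_neg]
        have hGsymm : (fun s => ∫ r in s..c, B r) = fun s => -∫ r in c..s, B r := by
          funext s
          exact intervalIntegral.integral_symm c s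
        have hrhsInt : IntervalIntegrable
            (fun s => B s * (D * ((∫ r in s..c, B r) ^ n / (n.factorial:ℝ))))
            volume τ c := by
          apply (hBii τ c).mul_continuousOn
          have : Continuous (fun s => ∫ r in s..c, B r) := by
            rw [hGsymm]; exact hGcont.neg
          exact (continuous_const.mul ((this.pow n).div_const _)).continuousOn
        calc ‖∫ s in (τ:ℝ)..c, (A' s).mulVec (Ue s - Ve s)‖
            ≤ ∫ s in (τ:ℝ)..c, ‖(A' s).mulVec (Ue s - Ve s)‖ :=
              intervalIntegral.norm_integral_le_integral_norm hτc
          _ ≤ ∫ s in (τ:ℝ)..c, B s * (D * ((∫ r in s..c, B r) ^ n / (n.factorial:ℝ))) := by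
              apply intervalIntegral.integral_mono_on hτc
                hdiffInt.norm.intervalIntegrable hrhsInt
              intro s hs
              have hsIc : s ∈ Ic := ⟨τ.2.1.trans hs.1, hs.2.trans hc.2⟩
              have habs : |∫ r in c..s, B r| = ∫ r in s..c, B r := by
                rw [intervalIntegral.integral_symm s c, abs_neg]
                exact abs_of_nonneg (intervalIntegral.integral_nonneg hs.2 fun r _ => hB0 r)
              calc ‖(A' s).mulVec (Ue s - Ve s)‖ ≤ B s * ‖Ue s - Ve s‖ := hbound s _
                _ ≤ B s * (D * ((∫ r in s..c, B r) ^ n / (n.factorial:ℝ))) := by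
                    apply mul_le_mul_of_nonneg_left _ (hB0 s)
                    have := pointbound s hsIc
                    rwa [habs] at this
          _ = (D / (n.factorial:ℝ)) * ∫ s in (τ:ℝ)..c, B s * (∫ r in s..c, B r) ^ n := by
              rw [← intervalIntegral.integral_const_mul]
              apply intervalIntegral.integral_congr
              intro s _
              ring
          _ ≤ (D / (n.factorial:ℝ)) * ((∫ r in (τ:ℝ)..c, B r) ^ (n+1) / ((n:ℝ)+1)) :=
              mul_le_mul_of_nonneg_left (key_ineq' B hBii hB0 c τ hτc n) (by positivity)
          _ = D * (|∫ r in c..(τ:ℝ), B r| ^ (n+1) / ((n+1).factorial : ℝ)) := by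
              have habs : |∫ r in c..(τ:ℝ), B r| = ∫ r in (τ:ℝ)..c, B r := by
                rw [intervalIntegral.integral_symm (τ:ℝ) c, abs_neg]
                exact abs_of_nonneg (intervalIntegral.integral_nonneg hτc fun r _ => hB0 r)
              rw [habs, Nat.factorial_succ]
              push_cast
              rw [div_mul_div_comm, mul_div_assoc]
              ring_nf
  -- global bound on the primitive of B
  set M : ℝ := ∫ x, B x with hM
  have hGM : ∀ x : ℝ, |∫ r in c..x, B r| ≤ M := by
    intro x
    have h1 : |∫ r in c..x, B r| ≤ ∫ r in Set.uIoc c x, |B r| := by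
      simpa [Real.norm_eq_abs] using
        intervalIntegral.norm_integral_le_integral_norm_uIoc (a := c) (b := x) (f := B)
          (μ := volume)
    have h2 : (∫ r in Set.uIoc c x, |B r|) = ∫ r in Set.uIoc c x, B r := by
      apply MeasureTheory.integral_congr_ae
      filter_upwards with r
      exact abs_of_nonneg (hB0 r)
    have h3 : (∫ r in Set.uIoc c x, B r) ≤ M :=
      setIntegral_le_integral hBint (Filter.Eventually.of_forall hB0)
    linarith
  -- choose an iterate that is a contraction
  obtain ⟨n, hn⟩ : ∃ n : ℕ, M ^ n / (n.factorial : ℝ) < 1/2 :=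
    ((FloorSemiring.tendsto_pow_div_factorial_atTop (K := ℝ) M).eventually_lt_const
      (by norm_num : (0:ℝ) < 1/2)).exists
  have hTn : ∀ u v : X, dist (T^[n] u) (T^[n] v) ≤ (1/2) * dist u v := by
    intro u v
    rw [ContinuousMap.dist_le (by positivity)]
    intro τ
    rw [dist_eq_norm]
    have hfac : (0:ℝ) < (n.factorial : ℝ) := by exact_mod_cast n.factorial_pos
    calc ‖(T^[n] u) τ - (T^[n] v) τ‖
        ≤ dist u v * (|∫ r in c..(τ:ℝ), B r| ^ n / (n.factorial : ℝ)) := key n u v τ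
      _ ≤ dist u v * (M ^ n / (n.factorial : ℝ)) := by
          apply mul_le_mul_of_nonneg_left _ dist_nonneg
          exact (div_le_div_iff_of_pos_right hfac).mpr
            (pow_le_pow_left₀ (abs_nonneg _) (hGM _) n)
      _ ≤ (1/2) * dist u v := by
          rw [mul_comm]
          exact mul_le_mul_of_nonneg_right hn.le dist_nonneg
  have hcontr : ContractingWith (1/2 : NNReal) (T^[n]) := by
    have hhalf : ((1/2 : NNReal) : ℝ) = 1/2 := by norm_num
    refine ⟨?_, LipschitzWith.of_dist_le_mul fun u v => ?_⟩
    · rw [← NNReal.coe_lt_coe, hhalf, NNReal.coe_one]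
      norm_num
    · rw [hhalf]
      exact hTn u v
  set W : X := ContractingWith.fixedPoint (T^[n]) hcontr with hWdef
  have hWfix : Function.IsFixedPt (T^[n]) W := hcontr.fixedPoint_isFixedPt
  have hTW : T W = W := by
    have h1 : Function.IsFixedPt (T^[n]) (T W) := by
      show (T^[n]) (T W) = T W
      rw [← Function.iterate_succ_apply, Function.iterate_succ_apply', hWfix.eq]
    exact hcontr.fixedPoint_unique' h1 hWfix
  have huniq : ∀ u : X, T u = u → u = W := fun u hu =>
    hcontr.fixedPoint_unique' (Function.IsFixedPt.iterate hu n) hWfix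
  -- assemble the solution
  refine ⟨fun t => Set.IccExtend hab' ⇑W t, ⟨(extcont W).continuousOn, ?_, ?_⟩, ?_⟩
  · apply ((hInt W).integrableOn (s := Ic)).congr_fun _ measurableSet_Icc
    intro s hs
    simp [hA'def, hφ'def, Set.indicator_of_mem hs]
  · intro t ht
    beta_reduce
    have h1 : Set.IccExtend hab' ⇑W t = W ⟨t, ht⟩ := Set.IccExtend_of_mem hab' _ ht
    rw [h1]
    have h2 : W ⟨t, ht⟩ = (T W) ⟨t, ht⟩ := by rw [hTW]
    rw [h2, hTapp]
    congr 1
    apply intervalIntegral.integral_congr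
    intro s hs
    have hsIc : s ∈ Ic := Set.uIcc_subset_Icc hc ht hs
    simp [hA'def, hφ'def, Set.indicator_of_mem hsIc]
  · rintro w' ⟨hw'c, hw'i, hw'eq⟩
    set u' : X := ContinuousMap.mk (Ic.restrict w') hw'c.restrict with hu'def
    have hext : ∀ s, ∀ hs : s ∈ Ic, Set.IccExtend hab' ⇑u' s = w' s := by
      intro s hs
      rw [Set.IccExtend_of_mem hab' _ hs]
      rfl
    have hfix' : T u' = u' := by
      apply ContinuousMap.ext
      intro τ
      rw [hTapp]
      have hcongr : (∫ s in c..(τ:ℝ), ((A' s).mulVec (Set.IccExtend hab' ⇑u' s) + φ' s))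
          = ∫ s in c..(τ:ℝ), ((A s).mulVec (w' s) + φ s) := by
        apply intervalIntegral.integral_congr
        intro s hs
        have hsIc : s ∈ Ic := Set.uIcc_subset_Icc hc τ.2 hs
        simp [hA'def, hφ'def, Set.indicator_of_mem hsIc, hext s hsIc]
      rw [hcongr, ← hw'eq (τ:ℝ) τ.2]
      rfl
    have hequal : u' = W := huniq u' hfix'
    intro t ht
    calc w' t = u' ⟨t, ht⟩ := rfl
      _ = W ⟨t, ht⟩ := by rw [hequal]
      _ = Set.IccExtend hab' ⇑W t := (Set.IccExtend_of_mem hab' _ ht).symm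
end

section
/- Let A be a Shin–Zettl matrix of even order m = 2n (n ≥ 2) on a finite interval [a,b] with A = A⁺, and let Γ₁, Γ₂ : Dom(L_max) → ℂ^{2n} be the boundary maps defined below. Then for all y, z ∈ Dom(L_max): ⟨L_max y, z⟩_{L²} − ⟨y, L_max z⟩_{L²} = ⟨Γ₁y, Γ₂z⟩_{ℂ^{2n}} − ⟨Γ₂y, Γ₁z⟩_{ℂ^{2n}} (the abstract Green identity). -/
open MeasureTheory Set Matrix Filter
open scoped ComplexInnerProductSpace

noncomputable section

/-- Lebesgue measure restricted to the interval `[a,b]`. -/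
def muab (a b : ℝ) : MeasureTheory.Measure ℝ := MeasureTheory.volume.restrict (Set.Icc a b)

/-- `A` is a Shin–Zettl matrix of order `m` on `[a,b]`. -/
structure IsShinZettl (a b : ℝ) {m : ℕ} (A : ℝ → Matrix (Fin m) (Fin m) ℂ) : Prop where
  eq_zero_of_gt : ∀ (k s : Fin m), (k : ℕ) + 1 < (s : ℕ) → ∀ t : ℝ, A t k s = 0
  integrable : ∀ (k s : Fin m), MeasureTheory.IntegrableOn (fun t => A t k s) (Set.Icc a b)
  superdiag_ne_zero : ∀ (k s : Fin m), (s : ℕ) = (k : ℕ) + 1 →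
    ∀ᵐ t ∂(muab a b), A t k s ≠ 0

/-- `HasQD a b A y w f` : for `k < m` the function `w k` is the `k`-th quasi-derivative of
`y = w 0` relative to the Shin–Zettl matrix `A`, each being absolutely continuous on `[a,b]`
(an indefinite integral of an `L¹` function), and `f` is the `m`-th quasi-derivative `D^[m]y`. -/
def HasQD (a b : ℝ) {m : ℕ} (A : ℝ → Matrix (Fin m) (Fin m) ℂ)
    (y : ℝ → ℂ) (w : Fin m → ℝ → ℂ) (f : ℝ → ℂ) : Prop :=
  (∀ j : Fin m, (j : ℕ) = 0 → w j = y) ∧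
  MeasureTheory.IntegrableOn f (Set.Icc a b) ∧
  ∀ j : Fin m,
    MeasureTheory.IntegrableOn
      (fun s => (∑ k, A s j k * w k s) + (if (j : ℕ) + 1 = m then f s else 0)) (Set.Icc a b) ∧
    ∀ t ∈ Set.Icc a b,
      w j t = w j a +
        ∫ s in a..t, ((∑ k, A s j k * w k s) + (if (j : ℕ) + 1 = m then f s else 0))

/-- The Hilbert space `L²([a,b],ℂ)`. -/
abbrev L2C (a b : ℝ) := MeasureTheory.Lp ℂ 2 (muab a b)

/-- The graph of the maximal quasi-differential operator `L_max` in `L²([a,b],ℂ)`. -/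
def maxGraph (a b : ℝ) {m : ℕ} (A : ℝ → Matrix (Fin m) (Fin m) ℂ) :
    Set (L2C a b × L2C a b) :=
  {p | ∃ y w f, HasQD a b A y w f ∧ MeasureTheory.MemLp f 2 (muab a b) ∧
    (⇑p.1 =ᵐ[muab a b] y) ∧ (⇑p.2 =ᵐ[muab a b] fun t => Complex.I ^ m * f t)}

/-- The graph of the minimal quasi-differential operator `L_min` in `L²([a,b],ℂ)`. -/
def minGraph (a b : ℝ) {m : ℕ} (A : ℝ → Matrix (Fin m) (Fin m) ℂ) :
    Set (L2C a b × L2C a b) :=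
  {p | ∃ y w f, HasQD a b A y w f ∧ MeasureTheory.MemLp f 2 (muab a b) ∧
    (⇑p.1 =ᵐ[muab a b] y) ∧ (⇑p.2 =ᵐ[muab a b] fun t => Complex.I ^ m * f t) ∧
    ∀ j : Fin m, w j a = 0 ∧ w j b = 0}

/-- The matrix `Λ_m`: `(Λ_m)_{j,k} = (−1)^j` if `j + k = m + 1` (1-based indexing),
`0` otherwise. -/
def LambdaM (m : ℕ) : Matrix (Fin m) (Fin m) ℂ :=
  Matrix.of fun j k => if (j : ℕ) + (k : ℕ) = m - 1 then (-1 : ℂ) ^ ((j : ℕ) + 1) else 0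

/-- The formally adjoint (Lagrange adjoint) matrix `A⁺ = −Λ_m⁻¹ conj(Aᵀ) Λ_m`. -/
def formalAdjoint {m : ℕ} (A : ℝ → Matrix (Fin m) (Fin m) ℂ) :
    ℝ → Matrix (Fin m) (Fin m) ℂ :=
  fun t => -((LambdaM m)⁻¹ * (A t)ᴴ * LambdaM m)

/-- The graph of the Hilbert-space adjoint of the operator whose graph is `S`:
`(g, h)` belongs to it iff `⟪T y, g⟫ = ⟪y, h⟫` for every `(y, T y) ∈ S`. -/
def adjointRel {a b : ℝ} (S : Set (L2C a b × L2C a b)) : Set (L2C a b × L2C a b) :=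
  {q | ∀ p ∈ S, ⟪p.2, q.1⟫ = ⟪p.1, q.2⟫}


/-- The boundary map `Γ₁` for even order `m = 2n`:
`Γ₁y = i^{2n} (−D^[2n−1]y(a), …, (−1)^n D^[n]y(a), D^[2n−1]y(b), …, (−1)^{n−1} D^[n]y(b))`.
The index `j < n` corresponds to `k = j+1 ∈ {1,…,n}` and the value is
`i^{2n}(−1)^k D^[2n−k]y(a)`; for `n ≤ j < 2n` (`k = j−n+1`) it is
`i^{2n}(−1)^{k−1} D^[2n−k]y(b)`.  Here `w k = D^[k]y`. -/
def Gamma1E (a b : ℝ) {n : ℕ} (w : Fin (2 * n) → ℝ → ℂ) : Fin (2 * n) → ℂ := fun j =>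
  if (j : ℕ) < n then
    Complex.I ^ (2 * n) * (-1 : ℂ) ^ ((j : ℕ) + 1) *
      w ⟨2 * n - 1 - (j : ℕ), by have := j.isLt; omega⟩ a
  else
    Complex.I ^ (2 * n) * (-1 : ℂ) ^ ((j : ℕ) - n) *
      w ⟨2 * n - 1 - ((j : ℕ) - n), by have := j.isLt; omega⟩ b

/-- The boundary map `Γ₂` for even order `m = 2n`:
`Γ₂y = (D^[0]y(a), …, D^[n−1]y(a), D^[0]y(b), …, D^[n−1]y(b))`.  Here `w k = D^[k]y`. -/
def Gamma2E (a b : ℝ) {n : ℕ} (w : Fin (2 * n) → ℝ → ℂ) : Fin (2 * n) → ℂ := fun j =>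
  if (j : ℕ) < n then w j a
  else w ⟨(j : ℕ) - n, by have := j.isLt; omega⟩ b


open intervalIntegral

lemma myIntegrable.conj {α : Type*} [MeasurableSpace α] {μ : Measure α} {f : α → ℂ}
    (h : Integrable f μ) : Integrable (fun x => (starRingEnd ℂ) (f x)) μ := by
  refine ⟨continuous_star.comp_aestronglyMeasurable h.1, ?_⟩
  refine h.2.congr' ?_
  filter_upwards with x
  simp

lemma myIntervalIntegral.conj {f : ℝ → ℂ} {a b : ℝ} :
    ∫ t in a..b, (starRingEnd ℂ) (f t) = (starRingEnd ℂ) (∫ t in a..b, f t) := by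
  simp only [intervalIntegral, integral_conj, map_sub]


lemma core_fubini (a b : ℝ) (hab : a ≤ b) (p q : ℝ → ℂ)
    (hp : IntegrableOn p (Icc a b)) (hq : IntegrableOn q (Icc a b)) :
    ((∫ t in a..b, q t * ∫ s in a..t, p s) + ∫ t in a..b, p t * ∫ s in a..t, q s)
      = (∫ s in a..b, p s) * ∫ s in a..b, q s := by
  set μ : Measure ℝ := volume.restrict (Ioc a b) with hμ
  have hp' : Integrable p μ := hp.mono_set Ioc_subset_Icc_self
  have hq' : Integrable q μ := hq.mono_set Ioc_subset_Icc_self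
  -- rewrite inner integrals as indicators
  have claim1 : ∀ t ∈ Ioc a b, (∫ s in a..t, p s) = ∫ s, (Iic t).indicator p s ∂μ := by
    intro t ht
    rw [MeasureTheory.integral_indicator measurableSet_Iic, hμ, Measure.restrict_restrict measurableSet_Iic]
    have : Iic t ∩ Ioc a b = Ioc a t := by
      ext x
      simp only [mem_inter_iff, mem_Iic, mem_Ioc]
      constructor
      · rintro ⟨h1, h2, h3⟩; exact ⟨h2, h1⟩
      · rintro ⟨h1, h2⟩; exact ⟨h2, h1, h2.trans ht.2⟩
    rw [this, integral_of_le ht.1.le]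
  have claim2 : ∀ t ∈ Ioc a b, (∫ s in a..t, q s) = ∫ s, (Iio t).indicator q s ∂μ := by
    intro t ht
    rw [MeasureTheory.integral_indicator measurableSet_Iio, hμ, Measure.restrict_restrict measurableSet_Iio]
    have : Iio t ∩ Ioc a b = Ioo a t := by
      ext x
      simp only [mem_inter_iff, mem_Iio, mem_Ioc, mem_Ioo]
      constructor
      · rintro ⟨h1, h2, h3⟩; exact ⟨h2, h1⟩
      · rintro ⟨h1, h2⟩; exact ⟨h2, h1, h2.le.trans ht.2⟩
    rw [this, integral_of_le ht.1.le, integral_Ioc_eq_integral_Ioo]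
  set F : ℝ × ℝ → ℂ := fun z => {z : ℝ × ℝ | z.2 ≤ z.1}.indicator (fun z => q z.1 * p z.2) z
    with hF
  set H : ℝ × ℝ → ℂ := fun z => {z : ℝ × ℝ | z.1 < z.2}.indicator (fun z => q z.1 * p z.2) z
    with hH
  have hmF : MeasurableSet {z : ℝ × ℝ | z.2 ≤ z.1} := measurableSet_le measurable_snd measurable_fst
  have hmH : MeasurableSet {z : ℝ × ℝ | z.1 < z.2} := measurableSet_lt measurable_fst measurable_snd
  have hFint : Integrable F (μ.prod μ) := (hq'.mul_prod hp').indicator hmF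
  have hHint : Integrable H (μ.prod μ) := (hq'.mul_prod hp').indicator hmH
  have e1 : (∫ t in a..b, q t * ∫ s in a..t, p s) = ∫ z, F z ∂(μ.prod μ) := by
    rw [integral_of_le hab, ← hμ, ← integral_integral (f := fun t s => F (t, s)) (by exact hFint)]
    refine integral_congr_ae ?_
    filter_upwards [ae_restrict_mem measurableSet_Ioc] with t ht
    rw [claim1 t ht, ← MeasureTheory.integral_const_mul]
    refine integral_congr_ae (ae_of_all _ fun s => ?_)
    simp only [hF, indicator_apply, mem_setOf_eq, mem_Iic, mul_ite, mul_zero]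
  have e2 : (∫ t in a..b, p t * ∫ s in a..t, q s) = ∫ z, H z ∂(μ.prod μ) := by
    have swap : ∫ z, H z ∂(μ.prod μ) = ∫ z, H z.swap ∂(μ.prod μ) := (integral_prod_swap H).symm
    rw [swap, integral_of_le hab, ← hμ]
    have hG : Integrable (fun z => H z.swap) (μ.prod μ) := hHint.swap
    rw [← integral_integral (f := fun t s => H (t, s).swap) (by exact hG)]
    refine integral_congr_ae ?_
    filter_upwards [ae_restrict_mem measurableSet_Ioc] with t ht
    rw [claim2 t ht, ← MeasureTheory.integral_const_mul]
    refine integral_congr_ae (ae_of_all _ fun s => ?_)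
    simp only [hH, indicator_apply, Prod.swap, mem_setOf_eq, mem_Iio, mul_ite, mul_zero]
    rw [mul_comm (q s) (p t)]
  have compl_eq : {z : ℝ × ℝ | z.1 < z.2} = {z : ℝ × ℝ | z.2 ≤ z.1}ᶜ := by
    ext z; simp only [mem_setOf_eq, mem_compl_iff, not_le]
  have sum_eq : ∀ z, F z + H z = q z.1 * p z.2 := by
    intro z
    rw [hF, hH, compl_eq]
    exact congrFun (Set.indicator_self_add_compl {z : ℝ × ℝ | z.2 ≤ z.1} _) z
  rw [e1, e2, ← integral_add hFint hHint]
  have : ∫ z, (F z + H z) ∂(μ.prod μ) = ∫ z : ℝ × ℝ, q z.1 * p z.2 ∂(μ.prod μ) :=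
    integral_congr_ae (ae_of_all _ sum_eq)
  rw [this, integral_prod_mul, integral_of_le hab, integral_of_le hab, ← hμ, mul_comm]

lemma parts (a b : ℝ) (hab : a ≤ b) (u v p q : ℝ → ℂ)
    (hp : IntegrableOn p (Icc a b)) (hq : IntegrableOn q (Icc a b))
    (hu : ∀ t ∈ Icc a b, u t = u a + ∫ s in a..t, p s)
    (hv : ∀ t ∈ Icc a b, v t = v a + ∫ s in a..t, q s) :
    ∫ t in a..b, (u t * q t + p t * v t) = u b * v b - u a * v a := by
  have hpu : IntegrableOn p (uIcc a b) := by rwa [uIcc_of_le hab]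
  have hqu : IntegrableOn q (uIcc a b) := by rwa [uIcc_of_le hab]
  set P : ℝ → ℂ := fun t => ∫ s in a..t, p s with hP
  set Q : ℝ → ℂ := fun t => ∫ s in a..t, q s with hQ
  have hPc : ContinuousOn P (Icc a b) := by
    have := continuousOn_primitive_interval hpu
    rwa [uIcc_of_le hab] at this
  have hQc : ContinuousOn Q (Icc a b) := by
    have := continuousOn_primitive_interval hqu
    rwa [uIcc_of_le hab] at this
  have ii : ∀ {f : ℝ → ℂ}, IntegrableOn f (Icc a b) → IntervalIntegrable f volume a b :=
    fun h => (intervalIntegrable_iff_integrableOn_Ioc_of_le hab).mpr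
      (h.mono_set Ioc_subset_Icc_self)
  have i1 : IntegrableOn (fun t => u a * q t) (Icc a b) := hq.const_mul _
  have i2 : IntegrableOn (fun t => P t * q t) (Icc a b) :=
    IntegrableOn.continuousOn_mul hPc hq isCompact_Icc
  have i3 : IntegrableOn (fun t => p t * v a) (Icc a b) := hp.mul_const _
  have i4 : IntegrableOn (fun t => p t * Q t) (Icc a b) :=
    IntegrableOn.mul_continuousOn hp hQc isCompact_Icc
  have congr1 : ∫ t in a..b, (u t * q t + p t * v t)
      = ∫ t in a..b, ((u a * q t + P t * q t) + (p t * v a + p t * Q t)) := by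
    refine integral_congr fun t ht => ?_
    rw [uIcc_of_le hab] at ht
    rw [hu t ht, hv t ht]; ring
  rw [congr1, integral_add (ii i1 |>.add (ii i2)) (ii i3 |>.add (ii i4)),
    integral_add (ii i1) (ii i2), integral_add (ii i3) (ii i4)]
  have e1 : ∫ t in a..b, u a * q t = u a * ∫ t in a..b, q t := integral_const_mul _ _
  have e3 : ∫ t in a..b, p t * v a = (∫ t in a..b, p t) * v a := integral_mul_const _ _
  have e2 : ∫ t in a..b, P t * q t = ∫ t in a..b, q t * P t :=
    integral_congr fun t _ => mul_comm _ _
  have key := core_fubini a b hab p q hp hq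
  have hub : u b = u a + ∫ s in a..b, p s := hu b ⟨hab, le_refl b⟩
  have hvb : v b = v a + ∫ s in a..b, q s := hv b ⟨hab, le_refl b⟩
  rw [e1, e2, e3, hub, hvb]
  have : (∫ t in a..b, q t * P t) + ∫ t in a..b, p t * Q t
      = (∫ s in a..b, p s) * ∫ s in a..b, q s := key
  linear_combination this

/-- The reflection `σ j = m - 1 - j` on `Fin (2n)`. -/
def sig {n : ℕ} (j : Fin (2 * n)) : Fin (2 * n) :=
  ⟨2 * n - 1 - (j : ℕ), by have := j.isLt; omega⟩

lemma sig_coe {n : ℕ} (j : Fin (2 * n)) : ((sig j : Fin (2 * n)) : ℕ) = 2 * n - 1 - (j : ℕ) := rfl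

lemma sig_sig {n : ℕ} (j : Fin (2 * n)) : sig (sig j) = j := by
  have := j.isLt
  apply Fin.ext
  simp only [sig_coe]
  omega

lemma npc (x y : ℕ) (h : x % 2 = y % 2) : (-1 : ℂ) ^ x = (-1 : ℂ) ^ y := by
  conv_lhs => rw [← Nat.div_add_mod x 2]
  conv_rhs => rw [← Nat.div_add_mod y 2]
  rw [pow_add, pow_add, pow_mul, pow_mul, neg_one_sq, one_pow, one_pow, h]

lemma lam_mul {n : ℕ} (M : Matrix (Fin (2 * n)) (Fin (2 * n)) ℂ) (j c : Fin (2 * n)) :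
    (LambdaM (2 * n) * M) j c = (-1 : ℂ) ^ ((j : ℕ) + 1) * M (sig j) c := by
  rw [Matrix.mul_apply]
  rw [Finset.sum_eq_single (sig j)]
  · have hj := j.isLt
    have : (j : ℕ) + ((sig j : Fin (2 * n)) : ℕ) = 2 * n - 1 := by
      rw [sig_coe]; omega
    simp [LambdaM, this]
  · intro l _ hl
    have hj := j.isLt
    have hl2 := l.isLt
    have : ¬ ((j : ℕ) + (l : ℕ) = 2 * n - 1) := by
      intro h
      exact hl (Fin.ext (by simp only [sig_coe]; omega))
    simp [LambdaM, this]
  · intro h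
    exact absurd (Finset.mem_univ _) h

lemma mul_lam {n : ℕ} (M : Matrix (Fin (2 * n)) (Fin (2 * n)) ℂ) (j c : Fin (2 * n)) :
    (M * LambdaM (2 * n)) j c
      = M j (sig c) * (-1 : ℂ) ^ (((sig c : Fin (2 * n)) : ℕ) + 1) := by
  rw [Matrix.mul_apply]
  rw [Finset.sum_eq_single (sig c)]
  · have hc := c.isLt
    have : ((sig c : Fin (2 * n)) : ℕ) + (c : ℕ) = 2 * n - 1 := by
      rw [sig_coe]; omega
    simp [LambdaM, this]
  · intro l _ hl
    have hc := c.isLt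
    have hl2 := l.isLt
    have : ¬ ((l : ℕ) + (c : ℕ) = 2 * n - 1) := by
      intro h
      exact hl (Fin.ext (by simp only [sig_coe]; omega))
    simp [LambdaM, this]
  · intro h
    exact absurd (Finset.mem_univ _) h

lemma lam_sq {n : ℕ} (hn : 1 ≤ n) : LambdaM (2 * n) * LambdaM (2 * n) = -1 := by
  ext j c
  rw [lam_mul]
  have hj := j.isLt
  have hc := c.isLt
  by_cases hcj : c = j
  · subst hcj
    have h1 : ((sig c : Fin (2 * n)) : ℕ) + (c : ℕ) = 2 * n - 1 := by
      rw [sig_coe]; omega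
    simp only [LambdaM, Matrix.of_apply, h1, if_pos, Matrix.neg_apply, Matrix.one_apply_eq]
    rw [← pow_add, sig_coe]
    have : (c : ℕ) + 1 + (2 * n - 1 - (c : ℕ) + 1) = 2 * n + 1 := by omega
    rw [this, npc (2 * n + 1) 1 (by omega), pow_one]
  · have h1 : ¬ (((sig j : Fin (2 * n)) : ℕ) + (c : ℕ) = 2 * n - 1) := by
      rw [sig_coe]
      intro h
      exact hcj (Fin.ext (by omega))
    simp [LambdaM, h1, Matrix.one_apply_ne' (by exact fun h => hcj (by rw [h]) : ¬ c = j)]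

lemma lam_inv {n : ℕ} (hn : 1 ≤ n) : (LambdaM (2 * n))⁻¹ = -LambdaM (2 * n) := by
  apply Matrix.inv_eq_right_inv
  rw [Matrix.mul_neg, lam_sq hn, neg_neg]

lemma entry_rel {n : ℕ} (hn : 1 ≤ n) {A : ℝ → Matrix (Fin (2 * n)) (Fin (2 * n)) ℂ}
    (hsa : ∀ t : ℝ, formalAdjoint A t = A t) (t : ℝ) (j k : Fin (2 * n)) :
    A t (sig k) j = (-1 : ℂ) ^ ((j : ℕ) + (k : ℕ)) * (starRingEnd ℂ) (A t (sig j) k) := by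
  have h := hsa t
  rw [formalAdjoint, lam_inv hn, Matrix.neg_mul, Matrix.neg_mul, neg_neg] at h
  have h2 : A t (sig k) j
      = (LambdaM (2 * n) * (A t)ᴴ * LambdaM (2 * n)) (sig k) j := by rw [h]
  rw [mul_lam, lam_mul, Matrix.conjTranspose_apply, sig_sig] at h2
  rw [h2]
  have hj := j.isLt
  have hk := k.isLt
  rw [mul_comm, ← mul_assoc, ← pow_add]
  congr 1
  apply npc
  simp only [sig_coe]
  omega

/-- The core pointwise algebraic identity. -/
lemma alg_id {n : ℕ} (hn : 1 ≤ n) (B : Matrix (Fin (2 * n)) (Fin (2 * n)) ℂ)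
    (hB : ∀ j k, B (sig k) j = (-1 : ℂ) ^ ((j : ℕ) + (k : ℕ)) * (starRingEnd ℂ) (B (sig j) k))
    (u v : Fin (2 * n) → ℂ) (cy cz : ℂ) :
    ∑ j : Fin (2 * n), (-1 : ℂ) ^ ((j : ℕ) + 1) *
      ((starRingEnd ℂ) (u j) * ((∑ k, B (sig j) k * v k)
          + (if ((sig j : Fin (2 * n)) : ℕ) + 1 = 2 * n then cz else 0))
        + (starRingEnd ℂ) ((∑ k, B j k * u k)
          + (if (j : ℕ) + 1 = 2 * n then cy else 0)) * v (sig j))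
    = (starRingEnd ℂ) cy * v ⟨0, by omega⟩ - (starRingEnd ℂ) (u ⟨0, by omega⟩) * cz := by
  have key : ∀ j : Fin (2 * n), (-1 : ℂ) ^ ((j : ℕ) + 1) *
      ((starRingEnd ℂ) (u j) * ((∑ k, B (sig j) k * v k)
          + (if ((sig j : Fin (2 * n)) : ℕ) + 1 = 2 * n then cz else 0))
        + (starRingEnd ℂ) ((∑ k, B j k * u k)
          + (if (j : ℕ) + 1 = 2 * n then cy else 0)) * v (sig j))
      = (∑ k, (-1 : ℂ) ^ ((j : ℕ) + 1) * (starRingEnd ℂ) (u j) * B (sig j) k * v k)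
        + (∑ k, (-1 : ℂ) ^ ((j : ℕ) + 1) * (starRingEnd ℂ) (B j k)
            * (starRingEnd ℂ) (u k) * v (sig j))
        + (if ((sig j : Fin (2 * n)) : ℕ) + 1 = 2 * n
            then (-1 : ℂ) ^ ((j : ℕ) + 1) * (starRingEnd ℂ) (u j) * cz else 0)
        + (if (j : ℕ) + 1 = 2 * n
            then (-1 : ℂ) ^ ((j : ℕ) + 1) * (starRingEnd ℂ) cy * v (sig j) else 0) := by
    intro j
    have r1 : (∑ k, (-1 : ℂ) ^ ((j : ℕ) + 1) * (starRingEnd ℂ) (u j) * B (sig j) k * v k)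
        = (-1 : ℂ) ^ ((j : ℕ) + 1) * ((starRingEnd ℂ) (u j) * ∑ k, B (sig j) k * v k) := by
      rw [Finset.mul_sum, Finset.mul_sum]
      exact Finset.sum_congr rfl fun k _ => by ring
    have r2 : (∑ k, (-1 : ℂ) ^ ((j : ℕ) + 1) * (starRingEnd ℂ) (B j k)
          * (starRingEnd ℂ) (u k) * v (sig j))
        = (-1 : ℂ) ^ ((j : ℕ) + 1)
          * ((∑ k, (starRingEnd ℂ) (B j k) * (starRingEnd ℂ) (u k)) * v (sig j)) := by
      rw [Finset.sum_mul, Finset.mul_sum]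
      exact Finset.sum_congr rfl fun k _ => by ring
    have r3 : (starRingEnd ℂ) (∑ k, B j k * u k)
        = ∑ k, (starRingEnd ℂ) (B j k) * (starRingEnd ℂ) (u k) := by
      rw [map_sum]
      exact Finset.sum_congr rfl fun k _ => _root_.map_mul _ _ _
    rw [map_add, r3, apply_ite (starRingEnd ℂ), map_zero, r1, r2]
    split_ifs <;> ring
  rw [Finset.sum_congr rfl (fun j _ => key j)]
  rw [Finset.sum_add_distrib, Finset.sum_add_distrib, Finset.sum_add_distrib]
  -- the two quadratic double sums cancel
  have quad : (∑ j : Fin (2 * n), ∑ k, (-1 : ℂ) ^ ((j : ℕ) + 1)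
        * (starRingEnd ℂ) (u j) * B (sig j) k * v k)
      + (∑ j : Fin (2 * n), ∑ k, (-1 : ℂ) ^ ((j : ℕ) + 1) * (starRingEnd ℂ) (B j k)
        * (starRingEnd ℂ) (u k) * v (sig j)) = 0 := by
    have hswap : (∑ j : Fin (2 * n), ∑ k, (-1 : ℂ) ^ ((j : ℕ) + 1)
          * (starRingEnd ℂ) (u j) * B (sig j) k * v k)
        = ∑ j : Fin (2 * n), ∑ k : Fin (2 * n), (-1 : ℂ) ^ ((k : ℕ) + 1)
          * (starRingEnd ℂ) (u k) * B (sig k) j * v j := Finset.sum_comm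
    have hre : (∑ j : Fin (2 * n), ∑ k, (-1 : ℂ) ^ ((j : ℕ) + 1) * (starRingEnd ℂ) (B j k)
          * (starRingEnd ℂ) (u k) * v (sig j))
        = ∑ j : Fin (2 * n), ∑ k, (-1 : ℂ) ^ (((sig j : Fin (2 * n)) : ℕ) + 1)
          * (starRingEnd ℂ) (B (sig j) k) * (starRingEnd ℂ) (u k) * v (sig (sig j)) := by
      refine (Fintype.sum_bijective sig (Function.Involutive.bijective sig_sig) _ _ ?_).symm
      intro j
      rfl
    rw [hswap, hre, ← Finset.sum_add_distrib]
    refine Finset.sum_eq_zero fun j _ => ?_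
    rw [← Finset.sum_add_distrib]
    refine Finset.sum_eq_zero fun k _ => ?_
    rw [sig_sig, hB j k]
    have hj := j.isLt
    have hk := k.isLt
    have e1 : (-1 : ℂ) ^ (((sig j : Fin (2 * n)) : ℕ) + 1) = (-1 : ℂ) ^ (j : ℕ) := by
      apply npc; simp only [sig_coe]; omega
    have e2 : (-1 : ℂ) ^ ((k : ℕ) + 1) * (-1 : ℂ) ^ ((j : ℕ) + (k : ℕ))
        = -((-1 : ℂ) ^ (j : ℕ)) := by
      rw [← pow_add, npc ((k : ℕ) + 1 + ((j : ℕ) + (k : ℕ))) ((j : ℕ) + 1) (by omega), pow_succ]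
      ring
    linear_combination ((starRingEnd ℂ) (u k) * (starRingEnd ℂ) (B (sig j) k) * v j) * e2
      + ((starRingEnd ℂ) (B (sig j) k) * (starRingEnd ℂ) (u k) * v (sig j)) * e1
      - ((starRingEnd ℂ) (u k) * (starRingEnd ℂ) (B (sig j) k) * v (sig j)) * e1
      + ((starRingEnd ℂ) (u k) * (starRingEnd ℂ) (B (sig j) k) * v j) * e1
  rw [quad, zero_add]
  have hn0 : (0 : ℕ) < 2 * n := by omega
  have s3 : (∑ j : Fin (2 * n), if ((sig j : Fin (2 * n)) : ℕ) + 1 = 2 * n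
        then (-1 : ℂ) ^ ((j : ℕ) + 1) * (starRingEnd ℂ) (u j) * cz else 0)
      = -((starRingEnd ℂ) (u ⟨0, hn0⟩) * cz) := by
    rw [Finset.sum_eq_single (⟨0, hn0⟩ : Fin (2 * n))]
    · have hc : ((sig (⟨0, hn0⟩ : Fin (2 * n)) : Fin (2 * n)) : ℕ) + 1 = 2 * n := by
        rw [sig_coe, Fin.val_mk]; omega
      rw [if_pos hc]
      simp only [pow_one]
      ring
    · intro j _ hj
      have hj2 := j.isLt
      have : ¬ (((sig j : Fin (2 * n)) : ℕ) + 1 = 2 * n) := by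
        rw [sig_coe]
        intro h
        exact hj (Fin.ext (by simp only [Fin.val_mk]; omega))
      rw [if_neg this]
    · intro h; exact absurd (Finset.mem_univ _) h
  have hlast : 2 * n - 1 < 2 * n := by omega
  have s4 : (∑ j : Fin (2 * n), if (j : ℕ) + 1 = 2 * n
        then (-1 : ℂ) ^ ((j : ℕ) + 1) * (starRingEnd ℂ) cy * v (sig j) else 0)
      = (starRingEnd ℂ) cy * v ⟨0, hn0⟩ := by
    rw [Finset.sum_eq_single (⟨2 * n - 1, hlast⟩ : Fin (2 * n))]
    · have hc : ((⟨2 * n - 1, hlast⟩ : Fin (2 * n)) : ℕ) + 1 = 2 * n := by simp only [Fin.val_mk]; omega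
      rw [if_pos hc]
      have h1 : (-1 : ℂ) ^ (((⟨2 * n - 1, hlast⟩ : Fin (2 * n)) : ℕ) + 1) = 1 := by
        rw [npc _ 0 (by simp only [Fin.val_mk]; omega), pow_zero]
      have h2 : sig (⟨2 * n - 1, hlast⟩ : Fin (2 * n)) = ⟨0, hn0⟩ := by
        apply Fin.ext
        rw [sig_coe]
        simp only
        omega
      rw [h1, h2, one_mul]
    · intro j _ hj
      have hj2 := j.isLt
      have : ¬ ((j : ℕ) + 1 = 2 * n) := by
        intro h
        exact hj (Fin.ext (by simp only [Fin.val_mk]; omega))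
      rw [if_neg this]
    · intro h; exact absurd (Finset.mem_univ _) h
  rw [s3, s4]
  ring

/-- Extension of a `Fin (2n)`-indexed family to `ℕ`. -/
def natw {n : ℕ} (w : Fin (2 * n) → ℝ → ℂ) : ℕ → ℝ → ℂ :=
  fun k => if h : k < 2 * n then w ⟨k, h⟩ else 0

lemma natw_eq {n : ℕ} (w : Fin (2 * n) → ℝ → ℂ) (k : ℕ) (h : k < 2 * n) :
    natw w k = w ⟨k, h⟩ := dif_pos h

lemma split_range_sum {n : ℕ} (f : ℕ → ℂ) :
    ∑ j ∈ Finset.range (2 * n), f j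
      = (∑ j ∈ Finset.range n, f j) + ∑ j ∈ Finset.range n, f (n + j) := by
  have h2 : ∑ i ∈ Finset.Ico n (2 * n), f i = ∑ j ∈ Finset.range n, f (n + j) := by
    have h3 : 2 * n - n = n := by omega
    rw [Finset.sum_Ico_eq_sum_range, h3]
  rw [Finset.range_eq_Ico, ← Finset.sum_Ico_consecutive f (Nat.zero_le n) (by omega : n ≤ 2 * n),
    h2, ← Finset.range_eq_Ico]

lemma final_comb {n : ℕ} (hn : 1 ≤ n) (Wya Wyb Wza Wzb : ℕ → ℂ) :
    ((-1 : ℂ) ^ n) * (∑ j ∈ Finset.range (2 * n),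
        (-1 : ℂ) ^ (j + 1) * (Wyb j * Wzb (2 * n - 1 - j) - Wya j * Wza (2 * n - 1 - j)))
    = (∑ k ∈ Finset.range (2 * n),
        (if k < n then (-1 : ℂ) ^ n * (-1 : ℂ) ^ (k + 1) * Wya (2 * n - 1 - k)
          else (-1 : ℂ) ^ n * (-1 : ℂ) ^ (k - n) * Wyb (2 * n - 1 - (k - n)))
        * (if k < n then Wza k else Wzb (k - n)))
      - ∑ k ∈ Finset.range (2 * n),
        (if k < n then Wya k else Wyb (k - n))
        * (if k < n then (-1 : ℂ) ^ n * (-1 : ℂ) ^ (k + 1) * Wza (2 * n - 1 - k)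
          else (-1 : ℂ) ^ n * (-1 : ℂ) ^ (k - n) * Wzb (2 * n - 1 - (k - n))) := by
  rw [split_range_sum, split_range_sum, split_range_sum]
  have R1a : (∑ k ∈ Finset.range n,
        (if k < n then (-1 : ℂ) ^ n * (-1 : ℂ) ^ (k + 1) * Wya (2 * n - 1 - k)
          else (-1 : ℂ) ^ n * (-1 : ℂ) ^ (k - n) * Wyb (2 * n - 1 - (k - n)))
        * (if k < n then Wza k else Wzb (k - n)))
      = ∑ k ∈ Finset.range n,
        ((-1 : ℂ) ^ n * (-1 : ℂ) ^ (k + 1) * Wya (2 * n - 1 - k)) * Wza k := by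
    refine Finset.sum_congr rfl fun k hk => ?_
    have h := Finset.mem_range.mp hk
    rw [if_pos h, if_pos h]
  have R1b : (∑ k ∈ Finset.range n,
        (if n + k < n then (-1 : ℂ) ^ n * (-1 : ℂ) ^ (n + k + 1) * Wya (2 * n - 1 - (n + k))
          else (-1 : ℂ) ^ n * (-1 : ℂ) ^ (n + k - n) * Wyb (2 * n - 1 - (n + k - n)))
        * (if n + k < n then Wza (n + k) else Wzb (n + k - n)))
      = ∑ k ∈ Finset.range n,
        ((-1 : ℂ) ^ n * (-1 : ℂ) ^ k * Wyb (2 * n - 1 - k)) * Wzb k := by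
    refine Finset.sum_congr rfl fun k hk => ?_
    have h : ¬ (n + k < n) := by omega
    have h2 : n + k - n = k := by omega
    rw [if_neg h, if_neg h, h2]
  have R2a : (∑ k ∈ Finset.range n,
        (if k < n then Wya k else Wyb (k - n))
        * (if k < n then (-1 : ℂ) ^ n * (-1 : ℂ) ^ (k + 1) * Wza (2 * n - 1 - k)
          else (-1 : ℂ) ^ n * (-1 : ℂ) ^ (k - n) * Wzb (2 * n - 1 - (k - n))))
      = ∑ k ∈ Finset.range n,
        Wya k * ((-1 : ℂ) ^ n * (-1 : ℂ) ^ (k + 1) * Wza (2 * n - 1 - k)) := by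
    refine Finset.sum_congr rfl fun k hk => ?_
    have h := Finset.mem_range.mp hk
    rw [if_pos h, if_pos h]
  have R2b : (∑ k ∈ Finset.range n,
        (if n + k < n then Wya (n + k) else Wyb (n + k - n))
        * (if n + k < n then (-1 : ℂ) ^ n * (-1 : ℂ) ^ (n + k + 1) * Wza (2 * n - 1 - (n + k))
          else (-1 : ℂ) ^ n * (-1 : ℂ) ^ (n + k - n) * Wzb (2 * n - 1 - (n + k - n))))
      = ∑ k ∈ Finset.range n,
        Wyb k * ((-1 : ℂ) ^ n * (-1 : ℂ) ^ k * Wzb (2 * n - 1 - k)) := by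
    refine Finset.sum_congr rfl fun k hk => ?_
    have h : ¬ (n + k < n) := by omega
    have h2 : n + k - n = k := by omega
    rw [if_neg h, if_neg h, h2]
  rw [R1a, R1b, R2a, R2b]
  have refl2 : (∑ j ∈ Finset.range n,
        (-1 : ℂ) ^ (n + j + 1) * (Wyb (n + j) * Wzb (2 * n - 1 - (n + j))
          - Wya (n + j) * Wza (2 * n - 1 - (n + j))))
      = ∑ j ∈ Finset.range n,
        (-1 : ℂ) ^ (n + (n - 1 - j) + 1) * (Wyb (n + (n - 1 - j)) * Wzb (2 * n - 1 - (n + (n - 1 - j)))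
          - Wya (n + (n - 1 - j)) * Wza (2 * n - 1 - (n + (n - 1 - j)))) :=
    (Finset.sum_range_reflect (fun j => (-1 : ℂ) ^ (n + j + 1)
      * (Wyb (n + j) * Wzb (2 * n - 1 - (n + j)) - Wya (n + j) * Wza (2 * n - 1 - (n + j)))) n).symm
  rw [refl2, mul_add, Finset.mul_sum, Finset.mul_sum]
  have D1 : (∑ j ∈ Finset.range n, (-1 : ℂ) ^ n * ((-1 : ℂ) ^ (j + 1)
        * (Wyb j * Wzb (2 * n - 1 - j) - Wya j * Wza (2 * n - 1 - j))))
      = ∑ j ∈ Finset.range n,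
        (-(Wya j * ((-1 : ℂ) ^ n * (-1 : ℂ) ^ (j + 1) * Wza (2 * n - 1 - j)))
          - Wyb j * ((-1 : ℂ) ^ n * (-1 : ℂ) ^ j * Wzb (2 * n - 1 - j))) := by
    refine Finset.sum_congr rfl fun j hj => ?_
    rw [pow_succ]
    ring
  have D2 : (∑ j ∈ Finset.range n, (-1 : ℂ) ^ n * ((-1 : ℂ) ^ (n + (n - 1 - j) + 1)
        * (Wyb (n + (n - 1 - j)) * Wzb (2 * n - 1 - (n + (n - 1 - j)))
          - Wya (n + (n - 1 - j)) * Wza (2 * n - 1 - (n + (n - 1 - j))))))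
      = ∑ j ∈ Finset.range n,
        (((-1 : ℂ) ^ n * (-1 : ℂ) ^ (j + 1) * Wya (2 * n - 1 - j)) * Wza j
          + ((-1 : ℂ) ^ n * (-1 : ℂ) ^ j * Wyb (2 * n - 1 - j)) * Wzb j) := by
    refine Finset.sum_congr rfl fun j hj => ?_
    have hjn := Finset.mem_range.mp hj
    have h1 : n + (n - 1 - j) = 2 * n - 1 - j := by omega
    have h2 : 2 * n - 1 - (2 * n - 1 - j) = j := by omega
    rw [h1, h2]
    have h3 : (-1 : ℂ) ^ (2 * n - 1 - j + 1) = (-1 : ℂ) ^ j := npc _ _ (by omega)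
    rw [h3, pow_succ]
    ring
  rw [D1, D2, Finset.sum_add_distrib, Finset.sum_sub_distrib]
  simp only [Finset.sum_neg_distrib]
  ring

/-- **The abstract Green identity for even order** `m = 2n`, `n ≥ 2`.  For a formally
self-adjoint Shin–Zettl matrix `A = A⁺` of order `2n` on `[a,b]` and any
`y, z ∈ Dom(L_max)` (with quasi-derivative data `wy, fy` and `wz, fz`):
`⟨L_max y, z⟩_{L²} − ⟨y, L_max z⟩_{L²} = ⟨Γ₁y, Γ₂z⟩_{ℂ^{2n}} − ⟨Γ₂y, Γ₁z⟩_{ℂ^{2n}}`,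
all inner products being conjugate-linear in the first argument. -/

theorem green_identity_even
    (a b : ℝ) (hab : a < b) (n : ℕ) (hn : 2 ≤ n)
    (A : ℝ → Matrix (Fin (2 * n)) (Fin (2 * n)) ℂ) (hA : IsShinZettl a b A)
    (hsa : ∀ t : ℝ, formalAdjoint A t = A t)
    (y z : ℝ → ℂ) (wy wz : Fin (2 * n) → ℝ → ℂ) (fy fz : ℝ → ℂ)
    (hy : HasQD a b A y wy fy) (hy2 : MeasureTheory.MemLp fy 2 (muab a b))
    (hz : HasQD a b A z wz fz) (hz2 : MeasureTheory.MemLp fz 2 (muab a b)) :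
    (∫ t in a..b, (starRingEnd ℂ) (Complex.I ^ (2 * n) * fy t) * z t) -
      (∫ t in a..b, (starRingEnd ℂ) (y t) * (Complex.I ^ (2 * n) * fz t)) =
    (∑ k : Fin (2 * n), (starRingEnd ℂ) (Gamma1E a b wy k) * Gamma2E a b wz k) -
      ∑ k : Fin (2 * n), (starRingEnd ℂ) (Gamma2E a b wy k) * Gamma1E a b wz k := by
  classical
  have hn1 : 1 ≤ n := by omega
  have hn0 : (0 : ℕ) < 2 * n := by omega
  have hab' : a ≤ b := hab.le
  obtain ⟨hy0, hfy1, hyj⟩ := hy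
  obtain ⟨hz0, hfz1, hzj⟩ := hz
  set gy : Fin (2 * n) → ℝ → ℂ := fun j s =>
    (∑ k, A s j k * wy k s) + (if (j : ℕ) + 1 = 2 * n then fy s else 0) with hgydef
  set gz : Fin (2 * n) → ℝ → ℂ := fun j s =>
    (∑ k, A s j k * wz k s) + (if (j : ℕ) + 1 = 2 * n then fz s else 0) with hgzdef
  have hgyint : ∀ j, IntegrableOn (gy j) (Icc a b) := fun j => (hyj j).1
  have hgzint : ∀ j, IntegrableOn (gz j) (Icc a b) := fun j => (hzj j).1
  have hyeq : ∀ j, ∀ t ∈ Icc a b, wy j t = wy j a + ∫ s in a..t, gy j s :=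
    fun j t ht => (hyj j).2 t ht
  have hzeq : ∀ j, ∀ t ∈ Icc a b, wz j t = wz j a + ∫ s in a..t, gz j s :=
    fun j t ht => (hzj j).2 t ht
  have hwyC : ∀ j, ContinuousOn (wy j) (Icc a b) := by
    intro j
    have h1 : IntegrableOn (gy j) (uIcc a b) := by rw [uIcc_of_le hab']; exact hgyint j
    have h2 : ContinuousOn (fun t => wy j a + ∫ s in a..t, gy j s) (Icc a b) := by
      have h3 := continuousOn_primitive_interval (a := a) (b := b) (μ := volume) h1
      rw [uIcc_of_le hab'] at h3
      exact continuousOn_const.add h3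
    exact h2.congr fun t ht => hyeq j t ht
  have hwzC : ∀ j, ContinuousOn (wz j) (Icc a b) := by
    intro j
    have h1 : IntegrableOn (gz j) (uIcc a b) := by rw [uIcc_of_le hab']; exact hgzint j
    have h2 : ContinuousOn (fun t => wz j a + ∫ s in a..t, gz j s) (Icc a b) := by
      have h3 := continuousOn_primitive_interval (a := a) (b := b) (μ := volume) h1
      rw [uIcc_of_le hab'] at h3
      exact continuousOn_const.add h3
    exact h2.congr fun t ht => hzeq j t ht
  have hconjC : ∀ j, ContinuousOn (fun t => (starRingEnd ℂ) (wy j t)) (Icc a b) :=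
    fun j => continuous_star.comp_continuousOn (hwyC j)
  have ii : ∀ {f : ℝ → ℂ}, IntegrableOn f (Icc a b) → IntervalIntegrable f volume a b :=
    fun h => (intervalIntegrable_iff_integrableOn_Ioc_of_le hab').mpr
      (h.mono_set Ioc_subset_Icc_self)
  have hSint : ∀ j : Fin (2 * n), IntegrableOn
      (fun t => (starRingEnd ℂ) (wy j t) * gz (sig j) t
        + (starRingEnd ℂ) (gy j t) * wz (sig j) t) (Icc a b) := fun j =>
    (IntegrableOn.continuousOn_mul (hconjC j) (hgzint (sig j)) isCompact_Icc).add
      (IntegrableOn.mul_continuousOn (myIntegrable.conj (hgyint j)) (hwzC (sig j)) isCompact_Icc)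
  have haux : ∀ j : Fin (2 * n),
      (∫ t in a..b, ((starRingEnd ℂ) (wy j t) * gz (sig j) t
        + (starRingEnd ℂ) (gy j t) * wz (sig j) t))
      = (starRingEnd ℂ) (wy j b) * wz (sig j) b
        - (starRingEnd ℂ) (wy j a) * wz (sig j) a := by
    intro j
    refine parts a b hab' (fun t => (starRingEnd ℂ) (wy j t)) (wz (sig j))
      (fun t => (starRingEnd ℂ) (gy j t)) (gz (sig j))
      (myIntegrable.conj (hgyint j)) (hgzint (sig j)) ?_ (hzeq (sig j))
    intro t ht
    show (starRingEnd ℂ) (wy j t)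
      = (starRingEnd ℂ) (wy j a) + ∫ s in a..t, (starRingEnd ℂ) (gy j s)
    rw [myIntervalIntegral.conj, ← map_add, ← hyeq j t ht]
  have hswap : (∑ j : Fin (2 * n), ((-1 : ℂ) ^ ((j : ℕ) + 1))
        * ((starRingEnd ℂ) (wy j b) * wz (sig j) b
          - (starRingEnd ℂ) (wy j a) * wz (sig j) a))
      = ∫ t in a..b, ∑ j : Fin (2 * n), ((-1 : ℂ) ^ ((j : ℕ) + 1))
        * ((starRingEnd ℂ) (wy j t) * gz (sig j) t
          + (starRingEnd ℂ) (gy j t) * wz (sig j) t) := by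
    rw [intervalIntegral.integral_finset_sum (fun j _ => (ii (hSint j)).const_mul _)]
    refine Finset.sum_congr rfl fun j _ => ?_
    rw [intervalIntegral.integral_const_mul, haux j]
  have hpt : ∀ t : ℝ, (∑ j : Fin (2 * n), ((-1 : ℂ) ^ ((j : ℕ) + 1))
        * ((starRingEnd ℂ) (wy j t) * gz (sig j) t
          + (starRingEnd ℂ) (gy j t) * wz (sig j) t))
      = (starRingEnd ℂ) (fy t) * wz ⟨0, hn0⟩ t
        - (starRingEnd ℂ) (wy ⟨0, hn0⟩ t) * fz t := by
    intro t
    exact alg_id hn1 (A t) (entry_rel hn1 hsa t) (fun k => wy k t) (fun k => wz k t)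
      (fy t) (fz t)
  have hz00 : wz ⟨0, hn0⟩ = z := hz0 ⟨0, hn0⟩ rfl
  have hy00 : wy ⟨0, hn0⟩ = y := hy0 ⟨0, hn0⟩ rfl
  have hI : Complex.I ^ (2 * n) = (-1 : ℂ) ^ n := by rw [pow_mul, Complex.I_sq]
  have hInt1 : IntegrableOn (fun t => (starRingEnd ℂ) (fy t) * wz ⟨0, hn0⟩ t) (Icc a b) :=
    IntegrableOn.mul_continuousOn (myIntegrable.conj hfy1) (hwzC ⟨0, hn0⟩) isCompact_Icc
  have hInt2 : IntegrableOn (fun t => (starRingEnd ℂ) (wy ⟨0, hn0⟩ t) * fz t) (Icc a b) :=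
    IntegrableOn.continuousOn_mul (hconjC ⟨0, hn0⟩) hfz1 isCompact_Icc
  have key : (∫ t in a..b, ((starRingEnd ℂ) (fy t) * wz ⟨0, hn0⟩ t))
        - (∫ t in a..b, (starRingEnd ℂ) (wy ⟨0, hn0⟩ t) * fz t)
      = ∑ j : Fin (2 * n), ((-1 : ℂ) ^ ((j : ℕ) + 1))
        * ((starRingEnd ℂ) (wy j b) * wz (sig j) b
          - (starRingEnd ℂ) (wy j a) * wz (sig j) a) := by
    rw [← intervalIntegral.integral_sub (ii hInt1) (ii hInt2), hswap]
    exact intervalIntegral.integral_congr fun t _ => (hpt t).symm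
  have e1 : (∫ t in a..b, (starRingEnd ℂ) (Complex.I ^ (2 * n) * fy t) * z t)
      = (-1 : ℂ) ^ n * ∫ t in a..b, (starRingEnd ℂ) (fy t) * wz ⟨0, hn0⟩ t := by
    rw [← intervalIntegral.integral_const_mul]
    refine intervalIntegral.integral_congr fun t _ => ?_
    rw [← hz00, _root_.map_mul, hI]
    simp only [_root_.map_pow, _root_.map_neg, _root_.map_one]
    ring
  have e2 : (∫ t in a..b, (starRingEnd ℂ) (y t) * (Complex.I ^ (2 * n) * fz t))
      = (-1 : ℂ) ^ n * ∫ t in a..b, (starRingEnd ℂ) (wy ⟨0, hn0⟩ t) * fz t := by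
    rw [← intervalIntegral.integral_const_mul]
    refine intervalIntegral.integral_congr fun t _ => ?_
    rw [← hy00, hI]
    ring
  rw [e1, e2, ← mul_sub, key]
  -- remaining: the combinatorial boundary identity
  have L : (∑ j : Fin (2 * n), ((-1 : ℂ) ^ ((j : ℕ) + 1))
        * ((starRingEnd ℂ) (wy j b) * wz (sig j) b
          - (starRingEnd ℂ) (wy j a) * wz (sig j) a))
      = ∑ j ∈ Finset.range (2 * n), (-1 : ℂ) ^ (j + 1)
        * ((starRingEnd ℂ) (natw wy j b) * natw wz (2 * n - 1 - j) b
          - (starRingEnd ℂ) (natw wy j a) * natw wz (2 * n - 1 - j) a) := by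
    rw [← Fin.sum_univ_eq_sum_range]
    refine Finset.sum_congr rfl fun j _ => ?_
    have hj := j.isLt
    rw [natw_eq wy _ j.isLt, natw_eq wz _ (by omega : 2 * n - 1 - (j : ℕ) < 2 * n)]
    rfl
  have G1 : (∑ k : Fin (2 * n), (starRingEnd ℂ) (Gamma1E a b wy k) * Gamma2E a b wz k)
      = ∑ k ∈ Finset.range (2 * n),
        (if k < n then (-1 : ℂ) ^ n * (-1 : ℂ) ^ (k + 1)
            * (starRingEnd ℂ) (natw wy (2 * n - 1 - k) a)
          else (-1 : ℂ) ^ n * (-1 : ℂ) ^ (k - n)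
            * (starRingEnd ℂ) (natw wy (2 * n - 1 - (k - n)) b))
        * (if k < n then natw wz k a else natw wz (k - n) b) := by
    rw [← Fin.sum_univ_eq_sum_range]
    refine Finset.sum_congr rfl fun j _ => ?_
    have hj := j.isLt
    by_cases h : (j : ℕ) < n
    · rw [if_pos h, if_pos h]
      simp only [Gamma1E, Gamma2E, if_pos h]
      rw [natw_eq wy _ (by omega : 2 * n - 1 - (j : ℕ) < 2 * n),
        natw_eq wz _ j.isLt, hI]
      try simp only [_root_.map_mul, _root_.map_pow, _root_.map_neg, _root_.map_one, Fin.eta]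
      all_goals try ring
    · rw [if_neg h, if_neg h]
      simp only [Gamma1E, Gamma2E, if_neg h]
      rw [natw_eq wy _ (by omega : 2 * n - 1 - ((j : ℕ) - n) < 2 * n),
        natw_eq wz _ (by omega : (j : ℕ) - n < 2 * n), hI]
      try simp only [_root_.map_mul, _root_.map_pow, _root_.map_neg, _root_.map_one, Fin.eta]
      all_goals try ring
  have G2 : (∑ k : Fin (2 * n), (starRingEnd ℂ) (Gamma2E a b wy k) * Gamma1E a b wz k)
      = ∑ k ∈ Finset.range (2 * n),
        (if k < n then (starRingEnd ℂ) (natw wy k a)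
          else (starRingEnd ℂ) (natw wy (k - n) b))
        * (if k < n then (-1 : ℂ) ^ n * (-1 : ℂ) ^ (k + 1) * natw wz (2 * n - 1 - k) a
          else (-1 : ℂ) ^ n * (-1 : ℂ) ^ (k - n) * natw wz (2 * n - 1 - (k - n)) b) := by
    rw [← Fin.sum_univ_eq_sum_range]
    refine Finset.sum_congr rfl fun j _ => ?_
    have hj := j.isLt
    by_cases h : (j : ℕ) < n
    · rw [if_pos h, if_pos h]
      simp only [Gamma1E, Gamma2E, if_pos h]
      rw [natw_eq wz _ (by omega : 2 * n - 1 - (j : ℕ) < 2 * n),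
        natw_eq wy _ j.isLt, hI]
      try simp only [_root_.map_mul, _root_.map_pow, _root_.map_neg, _root_.map_one, Fin.eta]
      all_goals try ring
    · rw [if_neg h, if_neg h]
      simp only [Gamma1E, Gamma2E, if_neg h]
      rw [natw_eq wz _ (by omega : 2 * n - 1 - ((j : ℕ) - n) < 2 * n),
        natw_eq wy _ (by omega : (j : ℕ) - n < 2 * n), hI]
  rw [L, G1, G2]
  exact final_comb hn1 (fun j => (starRingEnd ℂ) (natw wy j a))
    (fun j => (starRingEnd ℂ) (natw wy j b)) (fun j => natw wz j a) (fun j => natw wz j b)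

end
end

section
/- Let A be a Shin–Zettl matrix of odd order m = 2n+1 (n ≥ 1) on a finite interval [a,b] with A = A⁺, let α, β, γ, δ ∈ ℂ satisfy α·conj(γ) + conj(α)·γ = (−1)^n, β·conj(δ) + conj(β)·δ = (−1)^{n+1}, α·conj(δ) + conj(β)·γ = 0, β·conj(γ) + conj(α)·δ = 0, and αδ − βγ ≠ 0, and let Γ₁, Γ₂ : Dom(L_max) → ℂ^{2n+1} be the boundary maps defined below. Then for all y, z ∈ Dom(L_max): ⟨L_max y, z⟩_{L²} − ⟨y, L_max z⟩_{L²} = ⟨Γ₁y, Γ₂z⟩_{ℂ^{2n+1}} − ⟨Γ₂y, Γ₁z⟩_{ℂ^{2n+1}} (the abstract Green identity). -/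
open MeasureTheory Set Matrix Filter
open scoped ComplexInnerProductSpace

noncomputable section

/-- The boundary map `Γ₁` for odd order `m = 2n+1` with coefficients `α, β`:
for `j < n` (`k = j+1 ∈ {1,…,n}`) the value is `i^{2n+1}(−1)^k D^[2n+1−k]y(a)`; for
`n ≤ j < 2n` (`k = j−n+1`) it is `i^{2n+1}(−1)^{k−1} D^[2n+1−k]y(b)`; the last component
is `i^{2n+1}(α D^[n]y(b) + β D^[n]y(a))`.  Here `w k = D^[k]y`. -/
def Gamma1O (a b : ℝ) {n : ℕ} (αc βc : ℂ) (w : Fin (2 * n + 1) → ℝ → ℂ) :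
    Fin (2 * n + 1) → ℂ := fun j =>
  if (j : ℕ) < n then
    Complex.I ^ (2 * n + 1) * (-1 : ℂ) ^ ((j : ℕ) + 1) *
      w ⟨2 * n - (j : ℕ), by omega⟩ a
  else if (j : ℕ) < 2 * n then
    Complex.I ^ (2 * n + 1) * (-1 : ℂ) ^ ((j : ℕ) - n) *
      w ⟨2 * n - ((j : ℕ) - n), by omega⟩ b
  else
    Complex.I ^ (2 * n + 1) * (αc * w ⟨n, by omega⟩ b + βc * w ⟨n, by omega⟩ a)

/-- The boundary map `Γ₂` for odd order `m = 2n+1` with coefficients `γ, δ`: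
for `j < n` (`k = j+1`) the value is `D^[k−1]y(a)`; for `n ≤ j < 2n` (`k = j−n+1`) it is
`D^[k−1]y(b)`; the last component is `γ D^[n]y(b) + δ D^[n]y(a)`.  Here `w k = D^[k]y`. -/
def Gamma2O (a b : ℝ) {n : ℕ} (γc δc : ℂ) (w : Fin (2 * n + 1) → ℝ → ℂ) :
    Fin (2 * n + 1) → ℂ := fun j =>
  if (j : ℕ) < n then w j a
  else if (j : ℕ) < 2 * n then w ⟨(j : ℕ) - n, by omega⟩ b
  else γc * w ⟨n, by omega⟩ b + δc * w ⟨n, by omega⟩ a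
-- ===== auxiliary lemmas for the proof =====

private lemma myconj (f : ℝ → ℂ) (μ : MeasureTheory.Measure ℝ) (h : Integrable f μ) :
    Integrable (fun x => (starRingEnd ℂ) (f x)) μ := by
  refine ⟨(RCLike.continuous_conj.comp_aestronglyMeasurable h.1 : _), ?_⟩
  simpa [HasFiniteIntegral] using h.2

private lemma intervalIntegral_conj (f : ℝ → ℂ) (a t : ℝ) :
    ∫ s in a..t, (starRingEnd ℂ) (f s) = (starRingEnd ℂ) (∫ s in a..t, f s) := by
  simp only [intervalIntegral]
  rw [integral_conj, integral_conj, ← _root_.map_sub]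

private lemma prim_aux (a b : ℝ) (p u : ℝ → ℂ)
    (hp : IntegrableOn p (Icc a b))
    (hu : ∀ t ∈ Icc a b, u t = u a + ∫ s in a..t, p s) :
    (∃ C, ∀ t ∈ Icc a b, ‖u t‖ ≤ C) ∧
      AEStronglyMeasurable u (volume.restrict (Ioc a b)) := by
  set h : ℝ → ℂ := fun x => u a + ∫ t in Ioc a x, p t with hh
  have hcont : ContinuousOn h (Icc a b) :=
    continuousOn_const.add (intervalIntegral.continuousOn_primitive hp)
  have heq : ∀ t ∈ Icc a b, u t = h t := by
    intro t ht
    rw [hu t ht, hh]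
    simp only
    rw [intervalIntegral.integral_of_le ht.1]
  constructor
  · obtain ⟨C, hC⟩ := isCompact_Icc.exists_bound_of_continuousOn hcont
    exact ⟨C, fun t ht => (heq t ht) ▸ hC t ht⟩
  · have : AEStronglyMeasurable h (volume.restrict (Ioc a b)) :=
      (hcont.aestronglyMeasurable measurableSet_Icc).mono_measure
        (Measure.restrict_mono Ioc_subset_Icc_self le_rfl)
    refine this.congr ?_
    refine (ae_restrict_iff' measurableSet_Ioc).mpr (ae_of_all _ fun t ht => ?_)
    exact (heq t (Ioc_subset_Icc_self ht)).symm

private lemma fubini_sym (a b : ℝ) (f g : ℝ → ℂ)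
    (hf : IntegrableOn f (Icc a b)) (hg : IntegrableOn g (Icc a b)) :
    (∫ t in Ioc a b, f t * ∫ s in Ioc a t, g s) +
      (∫ t in Ioc a b, (∫ s in Ioc a t, f s) * g t) =
    (∫ t in Ioc a b, f t) * (∫ t in Ioc a b, g t) := by
  have hf' : IntegrableOn f (Ioc a b) := hf.mono_set Ioc_subset_Icc_self
  have hg' : IntegrableOn g (Ioc a b) := hg.mono_set Ioc_subset_Icc_self
  set μ : Measure ℝ := volume.restrict (Ioc a b) with hμ
  have hF : Integrable (fun p : ℝ × ℝ => f p.1 * g p.2) (μ.prod μ) := hf'.mul_prod hg'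
  have hs : MeasurableSet {p : ℝ × ℝ | p.2 ≤ p.1} := measurableSet_le measurable_snd measurable_fst
  have hs' : MeasurableSet {p : ℝ × ℝ | p.1 ≤ p.2} := measurableSet_le measurable_fst measurable_snd
  have hdiag : (μ.prod μ) {p : ℝ × ℝ | p.1 = p.2} = 0 := by
    rw [Measure.prod_apply (measurableSet_eq_fun measurable_fst measurable_snd)]
    have : ∀ x : ℝ, μ (Prod.mk x ⁻¹' {p : ℝ × ℝ | p.1 = p.2}) = 0 := by
      intro x
      have : Prod.mk x ⁻¹' {p : ℝ × ℝ | p.1 = p.2} = {x} := by ext y; simp [eq_comm]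
      rw [this]
      exact le_antisymm ((Measure.restrict_apply_le _ _).trans (by simp)) (zero_le)
    simp [this]
  have hsum : ∫ p, ({p : ℝ × ℝ | p.2 ≤ p.1}.indicator (fun p => f p.1 * g p.2)) p ∂μ.prod μ
      + ∫ p, ({p : ℝ × ℝ | p.1 ≤ p.2}.indicator (fun p => f p.1 * g p.2)) p ∂μ.prod μ
      = (∫ t, f t ∂μ) * (∫ t, g t ∂μ) := by
    rw [← integral_add (hF.indicator hs) (hF.indicator hs')]
    rw [← integral_prod_mul f g]
    apply integral_congr_ae
    have : ∀ᵐ p : ℝ × ℝ ∂μ.prod μ, p.1 ≠ p.2 := by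
      rw [ae_iff]; simpa using hdiag
    filter_upwards [this] with p hp
    rcases lt_or_gt_of_ne hp with h | h
    · simp [Set.indicator_apply, le_of_lt h, not_le.mpr h]
    · simp [Set.indicator_apply, le_of_lt h, not_le.mpr h]
  have h1 : ∫ p, ({p : ℝ × ℝ | p.2 ≤ p.1}.indicator (fun p => f p.1 * g p.2)) p ∂μ.prod μ
      = ∫ t in Ioc a b, f t * ∫ s in Ioc a t, g s := by
    rw [integral_prod _ (hF.indicator hs)]
    apply setIntegral_congr_fun measurableSet_Ioc
    intro t ht
    have : ∀ s : ℝ, ({p : ℝ × ℝ | p.2 ≤ p.1}.indicator (fun p => f p.1 * g p.2)) (t, s)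
        = (Iic t).indicator (fun s => f t * g s) s := by
      intro s; by_cases h : s ≤ t <;> simp [Set.indicator_apply, h]
    simp_rw [this]
    rw [integral_indicator measurableSet_Iic, hμ, Measure.restrict_restrict measurableSet_Iic]
    have : Iic t ∩ Ioc a b = Ioc a t := by
      ext s; simp only [mem_inter_iff, mem_Iic, mem_Ioc]
      constructor
      · rintro ⟨h1, h2, h3⟩; exact ⟨h2, h1⟩
      · rintro ⟨h1, h2⟩; exact ⟨h2, h1, h2.trans ht.2⟩
    rw [this, integral_const_mul]
  have h2 : ∫ p, ({p : ℝ × ℝ | p.1 ≤ p.2}.indicator (fun p => f p.1 * g p.2)) p ∂μ.prod μ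
      = ∫ t in Ioc a b, (∫ s in Ioc a t, f s) * g t := by
    rw [integral_prod_symm _ (hF.indicator hs')]
    apply setIntegral_congr_fun measurableSet_Ioc
    intro t ht
    have : ∀ s : ℝ, ({p : ℝ × ℝ | p.1 ≤ p.2}.indicator (fun p => f p.1 * g p.2)) (s, t)
        = (Iic t).indicator (fun s => f s * g t) s := by
      intro s; by_cases h : s ≤ t <;> simp [Set.indicator_apply, h]
    simp_rw [this]
    rw [integral_indicator measurableSet_Iic, hμ, Measure.restrict_restrict measurableSet_Iic]
    have : Iic t ∩ Ioc a b = Ioc a t := by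
      ext s; simp only [mem_inter_iff, mem_Iic, mem_Ioc]
      constructor
      · rintro ⟨h1, h2, h3⟩; exact ⟨h2, h1⟩
      · rintro ⟨h1, h2⟩; exact ⟨h2, h1, h2.trans ht.2⟩
    rw [this, integral_mul_const]
  rw [← h1, ← h2]
  exact hsum

private lemma ibp0 (a b : ℝ) (hab : a ≤ b) (p q u v : ℝ → ℂ)
    (hp : IntegrableOn p (Icc a b)) (hq : IntegrableOn q (Icc a b))
    (hu : ∀ t ∈ Icc a b, u t = u a + ∫ s in a..t, p s)
    (hv : ∀ t ∈ Icc a b, v t = v a + ∫ s in a..t, q s) :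
    Integrable (fun t => p t * v t + u t * q t) (volume.restrict (Ioc a b)) ∧
    ∫ t in Ioc a b, (p t * v t + u t * q t) = u b * v b - u a * v a := by
  obtain ⟨⟨Cu, hCu⟩, hum⟩ := prim_aux a b p u hp hu
  obtain ⟨⟨Cv, hCv⟩, hvm⟩ := prim_aux a b q v hq hv
  have hp' : IntegrableOn p (Ioc a b) := hp.mono_set Ioc_subset_Icc_self
  have hq' : IntegrableOn q (Ioc a b) := hq.mono_set Ioc_subset_Icc_self
  have haeu : ∀ᵐ t ∂(volume.restrict (Ioc a b)), ‖u t‖ ≤ Cu :=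
    (ae_restrict_iff' measurableSet_Ioc).mpr
      (ae_of_all _ fun t ht => hCu t (Ioc_subset_Icc_self ht))
  have haev : ∀ᵐ t ∂(volume.restrict (Ioc a b)), ‖v t‖ ≤ Cv :=
    (ae_restrict_iff' measurableSet_Ioc).mpr
      (ae_of_all _ fun t ht => hCv t (Ioc_subset_Icc_self ht))
  have hpv : Integrable (fun t => v t * p t) (volume.restrict (Ioc a b)) :=
    hp'.bdd_mul hvm haev
  have huq : Integrable (fun t => u t * q t) (volume.restrict (Ioc a b)) :=
    hq'.bdd_mul hum haeu
  refine ⟨(by simpa [mul_comm] using hpv : Integrable (fun t => p t * v t) _).add huq, ?_⟩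
  have hsplit : ∫ t in Ioc a b, (p t * v t + u t * q t)
      = (∫ t in Ioc a b, p t * v t) + ∫ t in Ioc a b, u t * q t := by
    rw [← integral_add (by simpa [mul_comm] using hpv) huq]
  set P : ℝ → ℂ := fun t => ∫ s in Ioc a t, p s with hP
  set Q : ℝ → ℂ := fun t => ∫ s in Ioc a t, q s with hQ
  have huP : ∀ t ∈ Icc a b, u t = u a + P t := by
    intro t ht; rw [hu t ht, intervalIntegral.integral_of_le ht.1]
  have hvQ : ∀ t ∈ Icc a b, v t = v a + Q t := by
    intro t ht; rw [hv t ht, intervalIntegral.integral_of_le ht.1]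
  have hPQint : Integrable (fun t => p t * Q t) (volume.restrict (Ioc a b)) := by
    have hQc : ContinuousOn Q (Icc a b) := intervalIntegral.continuousOn_primitive hq
    obtain ⟨CQ, hCQ⟩ := isCompact_Icc.exists_bound_of_continuousOn hQc
    have : Integrable (fun t => Q t * p t) (volume.restrict (Ioc a b)) :=
      hp'.bdd_mul ((hQc.aestronglyMeasurable measurableSet_Icc).mono_measure
        (Measure.restrict_mono Ioc_subset_Icc_self le_rfl))
        ((ae_restrict_iff' measurableSet_Ioc).mpr
          (ae_of_all _ fun t ht => hCQ t (Ioc_subset_Icc_self ht)))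
    simpa [mul_comm] using this
  have hPqint : Integrable (fun t => P t * q t) (volume.restrict (Ioc a b)) := by
    have hPc : ContinuousOn P (Icc a b) := intervalIntegral.continuousOn_primitive hp
    obtain ⟨CP, hCP⟩ := isCompact_Icc.exists_bound_of_continuousOn hPc
    exact hq'.bdd_mul ((hPc.aestronglyMeasurable measurableSet_Icc).mono_measure
        (Measure.restrict_mono Ioc_subset_Icc_self le_rfl))
        ((ae_restrict_iff' measurableSet_Ioc).mpr
          (ae_of_all _ fun t ht => hCP t (Ioc_subset_Icc_self ht)))
  have e1 : ∫ t in Ioc a b, p t * v t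
      = (∫ t in Ioc a b, p t) * v a + ∫ t in Ioc a b, p t * Q t := by
    have : ∫ t in Ioc a b, p t * v t = ∫ t in Ioc a b, (p t * v a + p t * Q t) := by
      apply setIntegral_congr_fun measurableSet_Ioc
      intro t ht
      show p t * v t = _
      rw [hvQ t (Ioc_subset_Icc_self ht)]; ring
    rw [this, integral_add (hp'.mul_const _) hPQint, integral_mul_const]
  have e2 : ∫ t in Ioc a b, u t * q t
      = u a * (∫ t in Ioc a b, q t) + ∫ t in Ioc a b, P t * q t := by
    have : ∫ t in Ioc a b, u t * q t = ∫ t in Ioc a b, (u a * q t + P t * q t) := by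
      apply setIntegral_congr_fun measurableSet_Ioc
      intro t ht
      show u t * q t = _
      rw [huP t (Ioc_subset_Icc_self ht)]; ring
    rw [this, integral_add (hq'.const_mul _) hPqint, integral_const_mul]
  have efub := fubini_sym a b p q hp hq
  have hub : u b = u a + P b := huP b ⟨hab, le_rfl⟩
  have hvb : v b = v a + Q b := hvQ b ⟨hab, le_rfl⟩
  have hPb : P b = ∫ t in Ioc a b, p t := rfl
  have hQb : Q b = ∫ t in Ioc a b, q t := rfl
  have efub' : (∫ t in Ioc a b, p t * Q t) + (∫ t in Ioc a b, P t * q t) = P b * Q b := efub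
  rw [hsplit, e1, e2, hub, hvb, ← hPb, ← hQb]
  linear_combination efub'

private lemma ibp1 (a b : ℝ) (hab : a ≤ b) (p q u v : ℝ → ℂ)
    (hp : IntegrableOn p (Icc a b)) (hq : IntegrableOn q (Icc a b))
    (hu : ∀ t ∈ Icc a b, u t = u a + ∫ s in a..t, p s)
    (hv : ∀ t ∈ Icc a b, v t = v a + ∫ s in a..t, q s) :
    Integrable (fun t => (starRingEnd ℂ) (p t) * v t + (starRingEnd ℂ) (u t) * q t)
      (volume.restrict (Ioc a b)) ∧
    ∫ t in Ioc a b, ((starRingEnd ℂ) (p t) * v t + (starRingEnd ℂ) (u t) * q t)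
      = (starRingEnd ℂ) (u b) * v b - (starRingEnd ℂ) (u a) * v a := by
  have hp' : IntegrableOn (fun t => (starRingEnd ℂ) (p t)) (Icc a b) := myconj p _ hp
  have hu' : ∀ t ∈ Icc a b, (starRingEnd ℂ) (u t)
      = (starRingEnd ℂ) (u a) + ∫ s in a..t, (starRingEnd ℂ) (p s) := by
    intro t ht
    rw [intervalIntegral_conj, ← _root_.map_add, ← hu t ht]
  exact ibp0 a b hab _ q _ v hp' hq hu' hv

private lemma negpow_eq' (n j : ℕ) (hj : j ≤ 2*n) :
    ((-1:ℂ))^(2*n - j + 1) = (-1)^(j+1) := by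
  have key : ∀ p q : ℕ, p % 2 = q % 2 → ((-1:ℂ))^p = (-1)^q := by
    intro p q hpq
    rw [← Nat.div_add_mod p 2, ← Nat.div_add_mod q 2, pow_add, pow_add, pow_mul, pow_mul]
    norm_num [hpq]
  exact key _ _ (by omega)

private lemma nterm_eq (n : ℕ) (im αc βc γc δc A B Z W : ℂ)
    (h1 : αc * (starRingEnd ℂ) γc + (starRingEnd ℂ) αc * γc = (-1 : ℂ) ^ n)
    (h2 : βc * (starRingEnd ℂ) δc + (starRingEnd ℂ) βc * δc = (-1 : ℂ) ^ (n + 1))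
    (h3 : αc * (starRingEnd ℂ) δc + (starRingEnd ℂ) βc * γc = 0)
    (h4 : βc * (starRingEnd ℂ) γc + (starRingEnd ℂ) αc * δc = 0)
    (hconj : (starRingEnd ℂ) im = -im) :
    (starRingEnd ℂ) (im * (αc * B + βc * A)) * (γc * Z + δc * W)
      - (starRingEnd ℂ) (γc * B + δc * A) * (im * (αc * Z + βc * W))
    = im * ((-1:ℂ)^(n+1) * (starRingEnd ℂ) B * Z)
      - im * ((-1:ℂ)^(n+1) * (starRingEnd ℂ) A * W) := by
  simp only [_root_.map_mul, _root_.map_add, hconj]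
  set X := (starRingEnd ℂ) B
  set Y := (starRingEnd ℂ) A
  linear_combination (-im*X*Z)*h1 + (-im*Y*W)*h2 + (-im*Y*Z)*h3 + (-im*X*W)*h4

private lemma green_alg (n : ℕ) (hn : 1 ≤ n) (im αc βc γc δc : ℂ)
    (h1 : αc * (starRingEnd ℂ) γc + (starRingEnd ℂ) αc * γc = (-1 : ℂ) ^ n)
    (h2 : βc * (starRingEnd ℂ) δc + (starRingEnd ℂ) βc * δc = (-1 : ℂ) ^ (n + 1))
    (h3 : αc * (starRingEnd ℂ) δc + (starRingEnd ℂ) βc * γc = 0)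
    (h4 : βc * (starRingEnd ℂ) γc + (starRingEnd ℂ) αc * δc = 0)
    (hconj : (starRingEnd ℂ) im = -im)
    (ua ub va vb : ℕ → ℂ) :
    im * ((∑ j ∈ Finset.range (2*n+1), (-1:ℂ)^(j+1) * (starRingEnd ℂ) (ub j) * vb (2*n - j)) -
          (∑ j ∈ Finset.range (2*n+1), (-1:ℂ)^(j+1) * (starRingEnd ℂ) (ua j) * va (2*n - j)))
    = (∑ j ∈ Finset.range (2*n+1), (starRingEnd ℂ)
         (if j < n then im * (-1:ℂ)^(j+1) * ua (2*n - j)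
          else if j < 2*n then im * (-1:ℂ)^(j-n) * ub (2*n - (j-n))
          else im * (αc * ub n + βc * ua n)) *
         (if j < n then va j else if j < 2*n then vb (j-n) else γc * vb n + δc * va n))
      - ∑ j ∈ Finset.range (2*n+1), (starRingEnd ℂ)
         (if j < n then ua j else if j < 2*n then ub (j-n) else γc * ub n + δc * ua n) *
         (if j < n then im * (-1:ℂ)^(j+1) * va (2*n - j)
          else if j < 2*n then im * (-1:ℂ)^(j-n) * vb (2*n - (j-n))
          else im * (αc * vb n + βc * va n)) := by
  have lhs_split : ∀ F : ℕ → ℂ, ∑ j ∈ Finset.range (2*n+1), F j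
      = (∑ j ∈ Finset.range n, F j) + F n + ∑ j ∈ Finset.range n, F (2*n - j) := by
    intro F
    rw [show 2*n+1 = (n+1)+n from by ring, Finset.sum_range_add, Finset.sum_range_succ]
    congr 1
    rw [← Finset.sum_range_reflect (fun j => F (n+1+j)) n]
    apply Finset.sum_congr rfl
    intro j hj
    have hj' : j < n := Finset.mem_range.mp hj
    congr 1
    omega
  have rhs_split : ∀ F : ℕ → ℂ, ∑ j ∈ Finset.range (2*n+1), F j
      = (∑ j ∈ Finset.range n, F j) + (∑ j ∈ Finset.range n, F (n + j)) + F (2*n) := by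
    intro F
    rw [show 2*n+1 = (n+n)+1 from by ring, Finset.sum_range_succ, Finset.sum_range_add,
      show n+n = 2*n from by ring]
  rw [lhs_split, lhs_split, rhs_split, rhs_split]
  have rconj : ∀ j : ℕ, (starRingEnd ℂ) ((-1:ℂ)^j) = (-1:ℂ)^j := by
    intro j; simp [_root_.map_pow]
  have e1 : ∀ j ∈ Finset.range n,
      (starRingEnd ℂ)
         (if j < n then im * (-1:ℂ)^(j+1) * ua (2*n - j)
          else if j < 2*n then im * (-1:ℂ)^(j-n) * ub (2*n - (j-n))
          else im * (αc * ub n + βc * ua n)) *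
         (if j < n then va j else if j < 2*n then vb (j-n) else γc * vb n + δc * va n)
      = -(im * ((-1:ℂ)^(j+1) * (starRingEnd ℂ) (ua (2*n-j)) * va j)) := by
    intro j hj
    have hj' : j < n := Finset.mem_range.mp hj
    rw [if_pos hj', if_pos hj']
    simp only [_root_.map_mul, hconj, rconj]
    ring
  have e2 : ∀ j ∈ Finset.range n,
      (starRingEnd ℂ)
         (if n+j < n then im * (-1:ℂ)^(n+j+1) * ua (2*n - (n+j))
          else if n+j < 2*n then im * (-1:ℂ)^(n+j-n) * ub (2*n - (n+j-n))
          else im * (αc * ub n + βc * ua n)) *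
         (if n+j < n then va (n+j) else if n+j < 2*n then vb (n+j-n) else γc * vb n + δc * va n)
      = im * ((-1:ℂ)^(j+1) * (starRingEnd ℂ) (ub (2*n-j)) * vb j) := by
    intro j hj
    have hj' : j < n := Finset.mem_range.mp hj
    rw [if_neg (by omega), if_pos (by omega), if_neg (by omega), if_pos (by omega),
      show n+j-n = j from by omega]
    simp only [_root_.map_mul, hconj, rconj]
    ring
  have e3 : ∀ j ∈ Finset.range n,
      (starRingEnd ℂ)
         (if j < n then ua j else if j < 2*n then ub (j-n) else γc * ub n + δc * ua n) *
         (if j < n then im * (-1:ℂ)^(j+1) * va (2*n - j)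
          else if j < 2*n then im * (-1:ℂ)^(j-n) * vb (2*n - (j-n))
          else im * (αc * vb n + βc * va n))
      = im * ((-1:ℂ)^(j+1) * (starRingEnd ℂ) (ua j) * va (2*n-j)) := by
    intro j hj
    have hj' : j < n := Finset.mem_range.mp hj
    rw [if_pos hj', if_pos hj']
    ring
  have e4 : ∀ j ∈ Finset.range n,
      (starRingEnd ℂ)
         (if n+j < n then ua (n+j) else if n+j < 2*n then ub (n+j-n) else γc * ub n + δc * ua n) *
         (if n+j < n then im * (-1:ℂ)^(n+j+1) * va (2*n - (n+j))
          else if n+j < 2*n then im * (-1:ℂ)^(n+j-n) * vb (2*n - (n+j-n))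
          else im * (αc * vb n + βc * va n))
      = -(im * ((-1:ℂ)^(j+1) * (starRingEnd ℂ) (ub j) * vb (2*n-j))) := by
    intro j hj
    have hj' : j < n := Finset.mem_range.mp hj
    rw [if_neg (by omega), if_pos (by omega), if_neg (by omega), if_pos (by omega),
      show n+j-n = j from by omega]
    ring
  rw [Finset.sum_congr rfl e1, Finset.sum_congr rfl e2, Finset.sum_congr rfl e3,
    Finset.sum_congr rfl e4]
  rw [if_neg (by omega), if_neg (by omega), if_neg (by omega), if_neg (by omega),
    if_neg (by omega), if_neg (by omega), if_neg (by omega), if_neg (by omega)]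
  have e5 : ∀ (u v : ℕ → ℂ), ∀ j ∈ Finset.range n,
      (-1:ℂ)^((2*n-j)+1) * (starRingEnd ℂ) (u (2*n-j)) * v (2*n - (2*n-j))
      = (-1:ℂ)^(j+1) * (starRingEnd ℂ) (u (2*n-j)) * v j := by
    intro u v j hj
    have hj' : j < n := Finset.mem_range.mp hj
    rw [negpow_eq' n j (by omega), show 2*n - (2*n-j) = j from by omega]
  rw [Finset.sum_congr rfl (e5 ub vb), Finset.sum_congr rfl (e5 ua va)]
  have hN := nterm_eq n im αc βc γc δc (ua n) (ub n) (vb n) (va n) h1 h2 h3 h4 hconj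
  rw [show 2*n - n = n from by omega]
  rw [Finset.sum_neg_distrib, Finset.sum_neg_distrib, ← Finset.mul_sum, ← Finset.mul_sum,
    ← Finset.mul_sum, ← Finset.mul_sum]
  linear_combination -hN

private lemma lambda_sq (n : ℕ) : LambdaM (2*n+1) * LambdaM (2*n+1) = 1 := by
  ext j k
  rw [Matrix.mul_apply, Matrix.one_apply]
  rw [Finset.sum_eq_single (⟨2*n - (j:ℕ), by omega⟩ : Fin (2*n+1))]
  · simp only [LambdaM, Matrix.of_apply]
    rw [if_pos (show (j:ℕ) + (2*n - (j:ℕ)) = 2*n+1-1 by omega)]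
    by_cases hkj : k = j
    · subst hkj
      rw [if_pos (show 2*n - (k:ℕ) + (k:ℕ) = 2*n+1-1 by omega), if_pos rfl]
      rw [← pow_add, show (k:ℕ)+1+(2*n-(k:ℕ)+1) = 2*(n+1) from by omega, pow_mul]
      norm_num
    · rw [if_neg, if_neg (Ne.symm hkj), mul_zero]
      intro h
      exact hkj (Fin.ext (show (k:ℕ) = (j:ℕ) by omega))
  · intro l _ hl
    simp only [LambdaM, Matrix.of_apply]
    rw [if_neg, zero_mul]
    intro h
    exact hl (Fin.ext (show (l:ℕ) = 2*n - (j:ℕ) by omega))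
  · intro h; exact absurd (Finset.mem_univ _) h

private lemma lambda_last (n : ℕ) (k : Fin (2*n+1)) :
    LambdaM (2*n+1) ⟨2*n, by omega⟩ k = if (k:ℕ) = 0 then -1 else 0 := by
  simp only [LambdaM, Matrix.of_apply]
  by_cases hk : (k:ℕ) = 0
  · rw [if_pos (show 2*n + (k:ℕ) = 2*n+1-1 by omega), if_pos hk]
    show (-1:ℂ)^(2*n+1) = -1
    rw [pow_succ, pow_mul]
    norm_num
  · rw [if_neg (show ¬(2*n + (k:ℕ) = 2*n+1-1) by omega), if_neg hk]

private lemma lambda_first (n : ℕ) (j : Fin (2*n+1)) :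
    LambdaM (2*n+1) j ⟨2*n, by omega⟩ = if (j:ℕ) = 0 then -1 else 0 := by
  simp only [LambdaM, Matrix.of_apply]
  by_cases hj : (j:ℕ) = 0
  · rw [if_pos (show (j:ℕ) + 2*n = 2*n+1-1 by omega), if_pos hj]
    show (-1:ℂ)^((j:ℕ)+1) = -1
    rw [hj]
    norm_num
  · rw [if_neg (show ¬((j:ℕ) + 2*n = 2*n+1-1) by omega), if_neg hj]

private lemma pointwise_green (n : ℕ) (M : Matrix (Fin (2*n+1)) (Fin (2*n+1)) ℂ)
    (hM : Mᴴ * LambdaM (2*n+1) + LambdaM (2*n+1) * M = 0)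
    (Wy Wz : Fin (2*n+1) → ℂ) (fy' fz' : ℂ) :
    ∑ j, ∑ k, LambdaM (2*n+1) j k *
      ((starRingEnd ℂ) ((∑ s, M j s * Wy s) + (if (j:ℕ) + 1 = 2*n+1 then fy' else 0)) * Wz k +
       (starRingEnd ℂ) (Wy j) * ((∑ s, M k s * Wz s) + (if (k:ℕ) + 1 = 2*n+1 then fz' else 0)))
    = -((starRingEnd ℂ) fy' * Wz ⟨0, by omega⟩ + (starRingEnd ℂ) (Wy ⟨0, by omega⟩) * fz') := by
  set Λ := LambdaM (2*n+1) with hΛ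
  have expand : ∀ j k : Fin (2*n+1), Λ j k *
      ((starRingEnd ℂ) ((∑ s, M j s * Wy s) + (if (j:ℕ) + 1 = 2*n+1 then fy' else 0)) * Wz k +
       (starRingEnd ℂ) (Wy j) * ((∑ s, M k s * Wz s) + (if (k:ℕ) + 1 = 2*n+1 then fz' else 0)))
      = ((Λ j k * (starRingEnd ℂ) ((M *ᵥ Wy) j) * Wz k
          + Λ j k * (starRingEnd ℂ) (Wy j) * ((M *ᵥ Wz) k))
        + (Λ j k * (starRingEnd ℂ) (if (j:ℕ) + 1 = 2*n+1 then fy' else 0) * Wz k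
          + Λ j k * (starRingEnd ℂ) (Wy j) * (if (k:ℕ) + 1 = 2*n+1 then fz' else 0))) := by
    intro j k
    simp only [Matrix.mulVec, dotProduct, _root_.map_add]
    ring
  have t1 : (∑ j, ∑ k, Λ j k * (starRingEnd ℂ) ((M *ᵥ Wy) j) * Wz k)
      = star (M *ᵥ Wy) ⬝ᵥ (Λ *ᵥ Wz) := by
    simp only [dotProduct, Matrix.mulVec, Pi.star_apply, Complex.star_def,
      Finset.mul_sum]
    exact Finset.sum_congr rfl fun j _ => Finset.sum_congr rfl fun k _ => by ring
  have t3 : (∑ j, ∑ k, Λ j k * (starRingEnd ℂ) (Wy j) * ((M *ᵥ Wz) k))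
      = star Wy ⬝ᵥ (Λ *ᵥ (M *ᵥ Wz)) := by
    simp only [dotProduct, Matrix.mulVec, Pi.star_apply, Complex.star_def,
      Finset.mul_sum]
    exact Finset.sum_congr rfl fun j _ => Finset.sum_congr rfl fun k _ =>
      Finset.sum_congr rfl fun s _ => by ring
  have hzero : star (M *ᵥ Wy) ⬝ᵥ (Λ *ᵥ Wz) + star Wy ⬝ᵥ (Λ *ᵥ (M *ᵥ Wz)) = 0 := by
    rw [Matrix.star_mulVec, Matrix.mulVec_mulVec]
    rw [Matrix.dotProduct_mulVec _ Λ Wz, Matrix.vecMul_vecMul]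
    rw [Matrix.dotProduct_mulVec _ (Λ * M) Wz]
    rw [← add_dotProduct, ← Matrix.vecMul_add, hM]
    simp
  have p1 : (∑ j, ∑ k, Λ j k * (starRingEnd ℂ) (if (j:ℕ) + 1 = 2*n+1 then fy' else 0) * Wz k)
      = -((starRingEnd ℂ) fy' * Wz ⟨0, by omega⟩) := by
    rw [Finset.sum_eq_single (⟨2*n, by omega⟩ : Fin (2*n+1))]
    · rw [if_pos (show 2*n + 1 = 2*n+1 from rfl)]
      rw [Finset.sum_eq_single (⟨0, by omega⟩ : Fin (2*n+1))]
      · rw [hΛ, lambda_last, if_pos (show ((⟨0, by omega⟩ : Fin (2*n+1)):ℕ) = 0 from rfl)]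
        ring
      · intro l _ hl
        rw [hΛ, lambda_last, if_neg]
        · ring
        · intro h; exact hl (Fin.ext (show (l:ℕ) = 0 from h))
      · intro h; exact absurd (Finset.mem_univ _) h
    · intro j _ hj
      rw [if_neg (fun h => hj (Fin.ext (show (j:ℕ) = 2*n by omega)))]
      simp
    · intro h; exact absurd (Finset.mem_univ _) h
  have p2 : (∑ j, ∑ k, Λ j k * (starRingEnd ℂ) (Wy j) * (if (k:ℕ) + 1 = 2*n+1 then fz' else 0))
      = -((starRingEnd ℂ) (Wy ⟨0, by omega⟩) * fz') := by
    rw [Finset.sum_comm]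
    rw [Finset.sum_eq_single (⟨2*n, by omega⟩ : Fin (2*n+1))]
    · rw [if_pos (show 2*n + 1 = 2*n+1 from rfl)]
      rw [Finset.sum_eq_single (⟨0, by omega⟩ : Fin (2*n+1))]
      · rw [hΛ, lambda_first, if_pos (show ((⟨0, by omega⟩ : Fin (2*n+1)):ℕ) = 0 from rfl)]
        ring
      · intro l _ hl
        rw [hΛ, lambda_first, if_neg]
        · ring
        · intro h; exact hl (Fin.ext (show (l:ℕ) = 0 from h))
      · intro h; exact absurd (Finset.mem_univ _) h
    · intro k _ hk
      rw [if_neg (fun h => hk (Fin.ext (show (k:ℕ) = 2*n by omega)))]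
      simp
    · intro h; exact absurd (Finset.mem_univ _) h
  calc ∑ j, ∑ k, Λ j k *
      ((starRingEnd ℂ) ((∑ s, M j s * Wy s) + (if (j:ℕ) + 1 = 2*n+1 then fy' else 0)) * Wz k +
       (starRingEnd ℂ) (Wy j) * ((∑ s, M k s * Wz s) + (if (k:ℕ) + 1 = 2*n+1 then fz' else 0)))
      = ∑ j, ∑ k, ((Λ j k * (starRingEnd ℂ) ((M *ᵥ Wy) j) * Wz k
          + Λ j k * (starRingEnd ℂ) (Wy j) * ((M *ᵥ Wz) k))
        + (Λ j k * (starRingEnd ℂ) (if (j:ℕ) + 1 = 2*n+1 then fy' else 0) * Wz k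
          + Λ j k * (starRingEnd ℂ) (Wy j) * (if (k:ℕ) + 1 = 2*n+1 then fz' else 0))) := by
        exact Finset.sum_congr rfl fun j _ => Finset.sum_congr rfl fun k _ => expand j k
    _ = ((∑ j, ∑ k, Λ j k * (starRingEnd ℂ) ((M *ᵥ Wy) j) * Wz k)
          + ∑ j, ∑ k, Λ j k * (starRingEnd ℂ) (Wy j) * ((M *ᵥ Wz) k))
        + ((∑ j, ∑ k, Λ j k * (starRingEnd ℂ) (if (j:ℕ) + 1 = 2*n+1 then fy' else 0) * Wz k)
          + ∑ j, ∑ k, Λ j k * (starRingEnd ℂ) (Wy j) * (if (k:ℕ) + 1 = 2*n+1 then fz' else 0)) := by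
        simp_rw [Finset.sum_add_distrib]
    _ = -((starRingEnd ℂ) fy' * Wz ⟨0, by omega⟩ + (starRingEnd ℂ) (Wy ⟨0, by omega⟩) * fz') := by
        rw [t1, t3, p1, p2, hzero]; ring

private lemma gt_eq (n : ℕ) (w1 w2 : Fin (2*n+1) → ℂ) (U V : ℕ → ℂ)
    (hU : ∀ j : Fin (2*n+1), U (j:ℕ) = w1 j) (hV : ∀ j : Fin (2*n+1), V (j:ℕ) = w2 j) :
    ∑ j, ∑ k, LambdaM (2*n+1) j k * ((starRingEnd ℂ) (w1 j) * w2 k)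
    = ∑ j ∈ Finset.range (2*n+1), (-1:ℂ)^(j+1) * (starRingEnd ℂ) (U j) * V (2*n - j) := by
  rw [← Fin.sum_univ_eq_sum_range
    (fun j => (-1:ℂ)^(j+1) * (starRingEnd ℂ) (U j) * V (2*n - j)) (2*n+1)]
  apply Finset.sum_congr rfl
  intro j _
  rw [Finset.sum_eq_single (⟨2*n - (j:ℕ), by omega⟩ : Fin (2*n+1))]
  · have hΛ : LambdaM (2*n+1) j ⟨2*n-(j:ℕ), by omega⟩ = (-1:ℂ)^((j:ℕ)+1) := by
      simp only [LambdaM, Matrix.of_apply]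
      rw [if_pos (show (j:ℕ) + (2*n - (j:ℕ)) = 2*n+1-1 by omega)]
    rw [hΛ, hU j, hV ⟨2*n - (j:ℕ), by omega⟩]
    ring
  · intro l _ hl
    simp only [LambdaM, Matrix.of_apply]
    rw [if_neg, zero_mul]
    intro h
    exact hl (Fin.ext (show (l:ℕ) = 2*n - (j:ℕ) by omega))
  · intro h; exact absurd (Finset.mem_univ _) h

private lemma g1_eq (a b : ℝ) (n : ℕ) (αc βc : ℂ) (w : Fin (2*n+1) → ℝ → ℂ)
    (Ua Ub : ℕ → ℂ)
    (hUa : ∀ j : Fin (2*n+1), Ua (j:ℕ) = w j a) (hUb : ∀ j : Fin (2*n+1), Ub (j:ℕ) = w j b)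
    (k : Fin (2*n+1)) :
    Gamma1O a b αc βc w k =
      (if (k:ℕ) < n then Complex.I^(2*n+1) * (-1:ℂ)^((k:ℕ)+1) * Ua (2*n - (k:ℕ))
       else if (k:ℕ) < 2*n then Complex.I^(2*n+1) * (-1:ℂ)^((k:ℕ)-n) * Ub (2*n - ((k:ℕ)-n))
       else Complex.I^(2*n+1) * (αc * Ub n + βc * Ua n)) := by
  simp only [Gamma1O]
  by_cases h1 : (k:ℕ) < n
  · rw [if_pos h1, if_pos h1, hUa ⟨2*n - (k:ℕ), by omega⟩]
  · by_cases h2 : (k:ℕ) < 2*n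
    · rw [if_neg h1, if_neg h1, if_pos h2, if_pos h2, hUb ⟨2*n - ((k:ℕ)-n), by omega⟩]
    · rw [if_neg h1, if_neg h1, if_neg h2, if_neg h2,
        hUa ⟨n, by omega⟩, hUb ⟨n, by omega⟩]

private lemma g2_eq (a b : ℝ) (n : ℕ) (γc δc : ℂ) (w : Fin (2*n+1) → ℝ → ℂ)
    (Ua Ub : ℕ → ℂ)
    (hUa : ∀ j : Fin (2*n+1), Ua (j:ℕ) = w j a) (hUb : ∀ j : Fin (2*n+1), Ub (j:ℕ) = w j b)
    (k : Fin (2*n+1)) :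
    Gamma2O a b γc δc w k =
      (if (k:ℕ) < n then Ua (k:ℕ)
       else if (k:ℕ) < 2*n then Ub ((k:ℕ)-n)
       else γc * Ub n + δc * Ua n) := by
  simp only [Gamma2O]
  by_cases h1 : (k:ℕ) < n
  · rw [if_pos h1, if_pos h1, hUa k]
  · by_cases h2 : (k:ℕ) < 2*n
    · rw [if_neg h1, if_neg h1, if_pos h2, if_pos h2, hUb ⟨(k:ℕ)-n, by omega⟩]
    · rw [if_neg h1, if_neg h1, if_neg h2, if_neg h2,
        hUa ⟨n, by omega⟩, hUb ⟨n, by omega⟩]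

-- ===== end auxiliary lemmas =====

/-- **The abstract Green identity for odd order** `m = 2n+1`, `n ≥ 1`.  For a formally
self-adjoint Shin–Zettl matrix `A = A⁺` of order `2n+1` on `[a,b]`, coefficients
`α, β, γ, δ ∈ ℂ` with `α conj γ + conj α γ = (−1)^n`, `β conj δ + conj β δ = (−1)^{n+1}`,
`α conj δ + conj β γ = 0`, `β conj γ + conj α δ = 0`, `αδ − βγ ≠ 0`, and any
`y, z ∈ Dom(L_max)` (with quasi-derivative data `wy, fy` and `wz, fz`):
`⟨L_max y, z⟩_{L²} − ⟨y, L_max z⟩_{L²} = ⟨Γ₁y, Γ₂z⟩_{ℂ^{2n+1}} − ⟨Γ₂y, Γ₁z⟩_{ℂ^{2n+1}}`,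
all inner products being conjugate-linear in the first argument. -/
theorem green_identity_odd
    (a b : ℝ) (hab : a < b) (n : ℕ) (hn : 1 ≤ n)
    (A : ℝ → Matrix (Fin (2 * n + 1)) (Fin (2 * n + 1)) ℂ) (hA : IsShinZettl a b A)
    (hsa : ∀ t : ℝ, formalAdjoint A t = A t)
    (αc βc γc δc : ℂ)
    (h1 : αc * (starRingEnd ℂ) γc + (starRingEnd ℂ) αc * γc = (-1 : ℂ) ^ n)
    (h2 : βc * (starRingEnd ℂ) δc + (starRingEnd ℂ) βc * δc = (-1 : ℂ) ^ (n + 1))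
    (h3 : αc * (starRingEnd ℂ) δc + (starRingEnd ℂ) βc * γc = 0)
    (h4 : βc * (starRingEnd ℂ) γc + (starRingEnd ℂ) αc * δc = 0)
    (h5 : αc * δc - βc * γc ≠ 0)
    (y z : ℝ → ℂ) (wy wz : Fin (2 * n + 1) → ℝ → ℂ) (fy fz : ℝ → ℂ)
    (hy : HasQD a b A y wy fy) (hy2 : MeasureTheory.MemLp fy 2 (muab a b))
    (hz : HasQD a b A z wz fz) (hz2 : MeasureTheory.MemLp fz 2 (muab a b)) :
    (∫ t in a..b, (starRingEnd ℂ) (Complex.I ^ (2 * n + 1) * fy t) * z t) -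
      (∫ t in a..b, (starRingEnd ℂ) (y t) * (Complex.I ^ (2 * n + 1) * fz t)) =
    (∑ k : Fin (2 * n + 1),
        (starRingEnd ℂ) (Gamma1O a b αc βc wy k) * Gamma2O a b γc δc wz k) -
      ∑ k : Fin (2 * n + 1),
        (starRingEnd ℂ) (Gamma2O a b γc δc wy k) * Gamma1O a b αc βc wz k := by
  classical
  have hab' : a ≤ b := hab.le
  obtain ⟨hy0, hfyInt, hyQD⟩ := hy
  obtain ⟨hz0, hfzInt, hzQD⟩ := hz
  have hz00 : wz ⟨0, by omega⟩ = z := hz0 ⟨0, by omega⟩ rfl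
  have hy00 : wy ⟨0, by omega⟩ = y := hy0 ⟨0, by omega⟩ rfl
  have himconj : (starRingEnd ℂ) (Complex.I ^ (2*n+1)) = -(Complex.I ^ (2*n+1)) := by
    rw [_root_.map_pow, Complex.conj_I, Odd.neg_pow ⟨n, by ring⟩]
  -- matrix key identity
  have hΛinv : (LambdaM (2*n+1))⁻¹ = LambdaM (2*n+1) := Matrix.inv_eq_right_inv (lambda_sq n)
  have hkey : ∀ t, (A t)ᴴ * LambdaM (2*n+1) + LambdaM (2*n+1) * A t = 0 := by
    intro t
    have h := hsa t
    simp only [formalAdjoint] at h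
    rw [hΛinv] at h
    calc (A t)ᴴ * LambdaM (2*n+1) + LambdaM (2*n+1) * A t
        = (A t)ᴴ * LambdaM (2*n+1) +
            LambdaM (2*n+1) * -(LambdaM (2*n+1) * (A t)ᴴ * LambdaM (2*n+1)) := by rw [h]
      _ = 0 := by
          rw [Matrix.mul_neg, ← Matrix.mul_assoc, ← Matrix.mul_assoc, lambda_sq n,
            Matrix.one_mul]
          simp
  -- integration by parts for each pair of quasi-derivatives
  have Hjk : ∀ j k : Fin (2*n+1),
      Integrable (fun t =>
        (starRingEnd ℂ) ((∑ s, A t j s * wy s t) + (if (j:ℕ) + 1 = 2*n+1 then fy t else 0)) *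
            wz k t +
        (starRingEnd ℂ) (wy j t) *
            ((∑ s, A t k s * wz s t) + (if (k:ℕ) + 1 = 2*n+1 then fz t else 0)))
        (volume.restrict (Ioc a b)) ∧
      ∫ t in Ioc a b,
        ((starRingEnd ℂ) ((∑ s, A t j s * wy s t) + (if (j:ℕ) + 1 = 2*n+1 then fy t else 0)) *
            wz k t +
        (starRingEnd ℂ) (wy j t) *
            ((∑ s, A t k s * wz s t) + (if (k:ℕ) + 1 = 2*n+1 then fz t else 0)))
        = (starRingEnd ℂ) (wy j b) * wz k b - (starRingEnd ℂ) (wy j a) * wz k a := by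
    intro j k
    exact ibp1 a b hab' _ _ _ _ (hyQD j).1 (hzQD k).1 (hyQD j).2 (hzQD k).2
  -- summing up
  have sumIBP : ∫ t in Ioc a b, (∑ j, ∑ k, LambdaM (2*n+1) j k *
        ((starRingEnd ℂ) ((∑ s, A t j s * wy s t) + (if (j:ℕ) + 1 = 2*n+1 then fy t else 0)) *
            wz k t +
        (starRingEnd ℂ) (wy j t) *
            ((∑ s, A t k s * wz s t) + (if (k:ℕ) + 1 = 2*n+1 then fz t else 0))))
      = (∑ j, ∑ k, LambdaM (2*n+1) j k * ((starRingEnd ℂ) (wy j b) * wz k b))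
        - (∑ j, ∑ k, LambdaM (2*n+1) j k * ((starRingEnd ℂ) (wy j a) * wz k a)) := by
    rw [integral_finset_sum _
      (fun j _ => integrable_finset_sum _ (fun k _ => ((Hjk j k).1.const_mul (LambdaM (2*n+1) j k))))]
    trans (∑ j : Fin (2*n+1), ∑ k : Fin (2*n+1), LambdaM (2*n+1) j k *
      ((starRingEnd ℂ) (wy j b) * wz k b - (starRingEnd ℂ) (wy j a) * wz k a))
    · exact Finset.sum_congr rfl fun j _ =>
        (integral_finset_sum _ (fun k _ => ((Hjk j k).1.const_mul (LambdaM (2*n+1) j k)))).trans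
          (Finset.sum_congr rfl fun k _ => by rw [integral_const_mul, (Hjk j k).2])
    · have inner : ∀ j ∈ (Finset.univ : Finset (Fin (2*n+1))),
          (∑ k, LambdaM (2*n+1) j k *
            ((starRingEnd ℂ) (wy j b) * wz k b - (starRingEnd ℂ) (wy j a) * wz k a))
          = (∑ k, LambdaM (2*n+1) j k * ((starRingEnd ℂ) (wy j b) * wz k b))
            - ∑ k, LambdaM (2*n+1) j k * ((starRingEnd ℂ) (wy j a) * wz k a) := by
        intro j _
        rw [← Finset.sum_sub_distrib]
        exact Finset.sum_congr rfl fun k _ => mul_sub _ _ _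
      rw [Finset.sum_congr rfl inner, Finset.sum_sub_distrib]
  -- pointwise identity
  have hpt : ∀ t : ℝ, (∑ j, ∑ k, LambdaM (2*n+1) j k *
        ((starRingEnd ℂ) ((∑ s, A t j s * wy s t) + (if (j:ℕ) + 1 = 2*n+1 then fy t else 0)) *
            wz k t +
        (starRingEnd ℂ) (wy j t) *
            ((∑ s, A t k s * wz s t) + (if (k:ℕ) + 1 = 2*n+1 then fz t else 0))))
      = -((starRingEnd ℂ) (fy t) * wz ⟨0, by omega⟩ t
          + (starRingEnd ℂ) (wy ⟨0, by omega⟩ t) * fz t) :=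
    fun t => pointwise_green n (A t) (hkey t) (fun s => wy s t) (fun s => wz s t) (fy t) (fz t)
  -- integrability of the two cross terms
  have Ify : Integrable (fun t => (starRingEnd ℂ) (fy t) * wz ⟨0, by omega⟩ t)
      (volume.restrict (Ioc a b)) := by
    obtain ⟨⟨C, hC⟩, hm⟩ := prim_aux a b _ _ (hzQD ⟨0, by omega⟩).1 (hzQD ⟨0, by omega⟩).2
    have hfy' : Integrable (fun t => (starRingEnd ℂ) (fy t)) (volume.restrict (Ioc a b)) :=
      myconj fy _ (hfyInt.mono_set Ioc_subset_Icc_self)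
    have := hfy'.bdd_mul hm
      ((ae_restrict_iff' measurableSet_Ioc).mpr
        (ae_of_all _ fun t ht => hC t (Ioc_subset_Icc_self ht)))
    simpa [mul_comm] using this
  have Ifz : Integrable (fun t => (starRingEnd ℂ) (wy ⟨0, by omega⟩ t) * fz t)
      (volume.restrict (Ioc a b)) := by
    obtain ⟨⟨C, hC⟩, hm⟩ := prim_aux a b _ _ (hyQD ⟨0, by omega⟩).1 (hyQD ⟨0, by omega⟩).2
    have hfz' : Integrable fz (volume.restrict (Ioc a b)) :=
      hfzInt.mono_set Ioc_subset_Icc_self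
    have hmc : AEStronglyMeasurable (fun t => (starRingEnd ℂ) (wy ⟨0, by omega⟩ t))
        (volume.restrict (Ioc a b)) :=
      RCLike.continuous_conj.comp_aestronglyMeasurable hm
    exact hfz'.bdd_mul hmc
      ((ae_restrict_iff' measurableSet_Ioc).mpr (ae_of_all _ fun t ht => by
        simpa using hC t (Ioc_subset_Icc_self ht)))
  -- core Green identity
  have coreInt : ∫ t in Ioc a b,
      ((starRingEnd ℂ) (fy t) * wz ⟨0, by omega⟩ t
        + (starRingEnd ℂ) (wy ⟨0, by omega⟩ t) * fz t)
      = (∑ j, ∑ k, LambdaM (2*n+1) j k * ((starRingEnd ℂ) (wy j a) * wz k a))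
        - (∑ j, ∑ k, LambdaM (2*n+1) j k * ((starRingEnd ℂ) (wy j b) * wz k b)) := by
    have h1 : ∫ t in Ioc a b,
        -((starRingEnd ℂ) (fy t) * wz ⟨0, by omega⟩ t
          + (starRingEnd ℂ) (wy ⟨0, by omega⟩ t) * fz t)
        = (∑ j, ∑ k, LambdaM (2*n+1) j k * ((starRingEnd ℂ) (wy j b) * wz k b))
        - (∑ j, ∑ k, LambdaM (2*n+1) j k * ((starRingEnd ℂ) (wy j a) * wz k a)) := by
      rw [← sumIBP]
      exact setIntegral_congr_fun measurableSet_Ioc (fun t _ => (hpt t).symm)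
    rw [integral_neg] at h1
    linear_combination -h1
  -- rewrite the left-hand side
  rw [intervalIntegral.integral_of_le hab', intervalIntegral.integral_of_le hab']
  have l1 : ∫ t in Ioc a b, (starRingEnd ℂ) (Complex.I ^ (2*n+1) * fy t) * z t
      = -(Complex.I ^ (2*n+1)) *
          ∫ t in Ioc a b, (starRingEnd ℂ) (fy t) * wz ⟨0, by omega⟩ t := by
    rw [← integral_const_mul]
    apply setIntegral_congr_fun measurableSet_Ioc
    intro t _
    show (starRingEnd ℂ) (Complex.I ^ (2*n+1) * fy t) * z t = _
    rw [_root_.map_mul, himconj, ← congrFun hz00 t]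
    ring
  have l2 : ∫ t in Ioc a b, (starRingEnd ℂ) (y t) * (Complex.I ^ (2*n+1) * fz t)
      = (Complex.I ^ (2*n+1)) *
          ∫ t in Ioc a b, (starRingEnd ℂ) (wy ⟨0, by omega⟩ t) * fz t := by
    rw [← integral_const_mul]
    apply setIntegral_congr_fun measurableSet_Ioc
    intro t _
    show (starRingEnd ℂ) (y t) * (Complex.I ^ (2*n+1) * fz t) = _
    rw [← congrFun hy00 t]
    ring
  have hadd : (∫ t in Ioc a b, (starRingEnd ℂ) (fy t) * wz ⟨0, by omega⟩ t)
      + (∫ t in Ioc a b, (starRingEnd ℂ) (wy ⟨0, by omega⟩ t) * fz t)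
      = (∑ j, ∑ k, LambdaM (2*n+1) j k * ((starRingEnd ℂ) (wy j a) * wz k a))
        - (∑ j, ∑ k, LambdaM (2*n+1) j k * ((starRingEnd ℂ) (wy j b) * wz k b)) := by
    rw [← integral_add Ify Ifz]
    exact coreInt
  -- boundary data as ℕ-indexed sequences
  set ua : ℕ → ℂ := fun j => if h : j < 2*n+1 then wy ⟨j, h⟩ a else 0 with hua'
  set ub : ℕ → ℂ := fun j => if h : j < 2*n+1 then wy ⟨j, h⟩ b else 0 with hub'
  set va : ℕ → ℂ := fun j => if h : j < 2*n+1 then wz ⟨j, h⟩ a else 0 with hva'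
  set vb : ℕ → ℂ := fun j => if h : j < 2*n+1 then wz ⟨j, h⟩ b else 0 with hvb'
  have hua : ∀ j : Fin (2*n+1), ua (j:ℕ) = wy j a := fun j => by
    rw [hua']; simp only [j.isLt, dif_pos, Fin.eta]
  have hub : ∀ j : Fin (2*n+1), ub (j:ℕ) = wy j b := fun j => by
    rw [hub']; simp only [j.isLt, dif_pos, Fin.eta]
  have hva : ∀ j : Fin (2*n+1), va (j:ℕ) = wz j a := fun j => by
    rw [hva']; simp only [j.isLt, dif_pos, Fin.eta]
  have hvb : ∀ j : Fin (2*n+1), vb (j:ℕ) = wz j b := fun j => by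
    rw [hvb']; simp only [j.isLt, dif_pos, Fin.eta]
  have GaEq : (∑ j, ∑ k, LambdaM (2*n+1) j k * ((starRingEnd ℂ) (wy j a) * wz k a))
      = ∑ j ∈ Finset.range (2*n+1), (-1:ℂ)^(j+1) * (starRingEnd ℂ) (ua j) * va (2*n - j) :=
    gt_eq n (fun j => wy j a) (fun k => wz k a) ua va hua hva
  have GbEq : (∑ j, ∑ k, LambdaM (2*n+1) j k * ((starRingEnd ℂ) (wy j b) * wz k b))
      = ∑ j ∈ Finset.range (2*n+1), (-1:ℂ)^(j+1) * (starRingEnd ℂ) (ub j) * vb (2*n - j) :=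
    gt_eq n (fun j => wy j b) (fun k => wz k b) ub vb hub hvb
  -- boundary sums as ℕ-indexed sums
  have S1eq : (∑ k : Fin (2*n+1),
        (starRingEnd ℂ) (Gamma1O a b αc βc wy k) * Gamma2O a b γc δc wz k)
      = ∑ j ∈ Finset.range (2*n+1), (starRingEnd ℂ)
         (if j < n then Complex.I^(2*n+1) * (-1:ℂ)^(j+1) * ua (2*n - j)
          else if j < 2*n then Complex.I^(2*n+1) * (-1:ℂ)^(j-n) * ub (2*n - (j-n))
          else Complex.I^(2*n+1) * (αc * ub n + βc * ua n)) *
         (if j < n then va j else if j < 2*n then vb (j-n) else γc * vb n + δc * va n) := by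
    rw [← Fin.sum_univ_eq_sum_range (fun j => (starRingEnd ℂ)
         (if j < n then Complex.I^(2*n+1) * (-1:ℂ)^(j+1) * ua (2*n - j)
          else if j < 2*n then Complex.I^(2*n+1) * (-1:ℂ)^(j-n) * ub (2*n - (j-n))
          else Complex.I^(2*n+1) * (αc * ub n + βc * ua n)) *
         (if j < n then va j else if j < 2*n then vb (j-n) else γc * vb n + δc * va n))
         (2*n+1)]
    exact Finset.sum_congr rfl fun k _ => by
      rw [g1_eq a b n αc βc wy ua ub hua hub k, g2_eq a b n γc δc wz va vb hva hvb k]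
  have S2eq : (∑ k : Fin (2*n+1),
        (starRingEnd ℂ) (Gamma2O a b γc δc wy k) * Gamma1O a b αc βc wz k)
      = ∑ j ∈ Finset.range (2*n+1), (starRingEnd ℂ)
         (if j < n then ua j else if j < 2*n then ub (j-n) else γc * ub n + δc * ua n) *
         (if j < n then Complex.I^(2*n+1) * (-1:ℂ)^(j+1) * va (2*n - j)
          else if j < 2*n then Complex.I^(2*n+1) * (-1:ℂ)^(j-n) * vb (2*n - (j-n))
          else Complex.I^(2*n+1) * (αc * vb n + βc * va n)) := by
    rw [← Fin.sum_univ_eq_sum_range (fun j => (starRingEnd ℂ)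
         (if j < n then ua j else if j < 2*n then ub (j-n) else γc * ub n + δc * ua n) *
         (if j < n then Complex.I^(2*n+1) * (-1:ℂ)^(j+1) * va (2*n - j)
          else if j < 2*n then Complex.I^(2*n+1) * (-1:ℂ)^(j-n) * vb (2*n - (j-n))
          else Complex.I^(2*n+1) * (αc * vb n + βc * va n))) (2*n+1)]
    exact Finset.sum_congr rfl fun k _ => by
      rw [g2_eq a b n γc δc wy ua ub hua hub k, g1_eq a b n αc βc wz va vb hva hvb k]
  have halg := green_alg n hn (Complex.I^(2*n+1)) αc βc γc δc h1 h2 h3 h4 himconj ua ub va vb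
  rw [l1, l2, S1eq, S2eq]
  linear_combination halg - (Complex.I^(2*n+1)) * hadd
    - (Complex.I^(2*n+1)) * GaEq + (Complex.I^(2*n+1)) * GbEq


end
end
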